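/- arXiv:1610.04639 — 4 statements merged into one kernel-verified Lean document; each statement's English description precedes it below -/
import Mathlib

section
/- Let Π be an orthogonal projection on L_2(E, μ) with range L, and g : E → [0,1] a bounded measurable function such that 1 + (g−1)Π is invertible. Then the subspace √g L = {√g φ : φ ∈ L} is closed in L_2(E, μ), and the operator √g Π (1 + (g−1)Π)^{-1} √g is the orthogonal projection onto √g L. -/
open ContinuousLinearMap Filter MeasureTheory
open scoped NNReal ENNReal Topology

noncomputable section

variable {H : Type*} [NormedAddCommGroup H] [InnerProductSpace ℂ H] [CompleteSpace H]
variable {ι : Type*}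

/-- `T` is Hilbert–Schmidt w.r.t. the Hilbert basis `e`. -/
def IsHS (e : HilbertBasis ι ℂ H) (T : H →L[ℂ] H) : Prop :=
  Summable fun i => ‖T (e i)‖ ^ 2

/-- Hilbert–Schmidt norm of `T` w.r.t. the Hilbert basis `e`. -/
noncomputable def hsNorm (e : HilbertBasis ι ℂ H) (T : H →L[ℂ] H) : ℝ :=
  Real.sqrt (∑' i, ‖T (e i)‖ ^ 2)

/-- Trace of `T` w.r.t. the Hilbert basis `e`. -/
noncomputable def opTrace (e : HilbertBasis ι ℂ H) (T : H →L[ℂ] H) : ℂ :=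
  ∑' i, (inner ℂ (e i : H) (T (e i)) : ℂ)

/-- `T` is trace class: it is a product of two Hilbert–Schmidt operators. -/
def IsTraceClass (e : HilbertBasis ι ℂ H) (T : H →L[ℂ] H) : Prop :=
  ∃ A B : H →L[ℂ] H, IsHS e A ∧ IsHS e B ∧ T = adjoint A ∘L B

/-- Trace norm `tr √(T* T)` w.r.t. the Hilbert basis `e`. -/
noncomputable def traceNorm (e : HilbertBasis ι ℂ H) (T : H →L[ℂ] H) : ℝ :=
  ∑' i, ((inner ℂ (e i : H) ((CFC.sqrt (adjoint T * T)) (e i)) : ℂ)).re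

/-- The orthogonal projection onto `K`, as an operator `H →L[ℂ] H`. -/
noncomputable def projCLM (K : Submodule ℂ H) [K.HasOrthogonalProjection] : H →L[ℂ] H :=
  K.subtypeL ∘L K.orthogonalProjectionOnto

/-- if `1 + (g-1) P` is invertible then `sqrt g · L` is closed and
`sqrt g P (1 + (g-1) P)⁻¹ sqrt g` is the orthogonal projection (self-adjoint idempotent)
onto it. Here `Mg` is multiplication by `sqrt g`, so multiplication by `g` is `Mg Mg`. -/
theorem stmt9 {E : Type*} [MeasurableSpace E] {μ : Measure E} [SigmaFinite μ]
    (P : Lp ℂ 2 μ →L[ℂ] Lp ℂ 2 μ) (hproj : P ∘L P = P) (hsa : IsSelfAdjoint P)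
    (g : E → ℝ) (hgm : Measurable g) (hg0 : ∀ x, 0 ≤ g x) (hg1 : ∀ x, g x ≤ 1)
    (Mg : Lp ℂ 2 μ →L[ℂ] Lp ℂ 2 μ)
    (hMg : ∀ φ : Lp ℂ 2 μ, (Mg φ : E → ℂ) =ᵐ[μ] fun x => (Real.sqrt (g x) : ℂ) * φ x)
    (hU : IsUnit (1 + (Mg ∘L Mg - 1) ∘L P))
    (Pg : Lp ℂ 2 μ →L[ℂ] Lp ℂ 2 μ)
    (hPg : Pg = Mg ∘L P ∘L Ring.inverse (1 + (Mg ∘L Mg - 1) ∘L P) ∘L Mg) :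
    IsClosed ((⇑Mg) '' ((LinearMap.range (P : Lp ℂ 2 μ →ₗ[ℂ] Lp ℂ 2 μ) : Submodule ℂ (Lp ℂ 2 μ)) : Set (Lp ℂ 2 μ))) ∧
      Pg ∘L Pg = Pg ∧ IsSelfAdjoint Pg ∧
      LinearMap.range (Pg : Lp ℂ 2 μ →ₗ[ℂ] Lp ℂ 2 μ) = Submodule.map (Mg : Lp ℂ 2 μ →ₗ[ℂ] Lp ℂ 2 μ) (LinearMap.range (P : Lp ℂ 2 μ →ₗ[ℂ] Lp ℂ 2 μ)) := by
  -- `Mg` is self-adjoint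
  have hA : IsSelfAdjoint Mg := by
    rw [ContinuousLinearMap.isSelfAdjoint_iff_isSymmetric]
    intro f h
    show (inner ℂ (Mg f) h : ℂ) = inner ℂ f (Mg h)
    rw [MeasureTheory.L2.inner_def, MeasureTheory.L2.inner_def]
    refine integral_congr_ae ?_
    filter_upwards [hMg f, hMg h] with x h1 h2
    rw [h1, h2, RCLike.inner_apply, RCLike.inner_apply, map_mul, Complex.conj_ofReal]
    ring
  set D : Lp ℂ 2 μ →L[ℂ] Lp ℂ 2 μ := 1 + (Mg ∘L Mg - 1) ∘L P with hDdef
  have hDm : D = 1 + (Mg * Mg - 1) * P := rfl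
  have hP2 : P * P = P := hproj
  have hPgm : Pg = Mg * P * Ring.inverse D * Mg := by
    rw [hPg]; rw [mul_assoc, mul_assoc]; rfl
  have h1 : D * P = Mg * Mg * P := by
    have : D * P = P + (Mg * Mg - 1) * (P * P) := by rw [hDm]; noncomm_ring
    rw [this, hP2]; noncomm_ring
  have h2 : Ring.inverse D * (Mg * Mg * P) = P := by
    rw [← h1, ← mul_assoc, Ring.inverse_mul_cancel _ hU, one_mul]
  have hDs : star D = 1 + P * (Mg * Mg - 1) := by
    rw [hDm]
    simp [star_mul, star_sub, hA.star_eq, hsa.star_eq]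
  have h3 : star D * P = P * D := by rw [hDs, hDm]; noncomm_ring
  have hUs : IsUnit (star D) := hU.star
  have h4 : P * Ring.inverse D = Ring.inverse (star D) * P := by
    calc P * Ring.inverse D
        = Ring.inverse (star D) * (star D * P) * Ring.inverse D := by
          rw [← mul_assoc, Ring.inverse_mul_cancel _ hUs, one_mul]
      _ = Ring.inverse (star D) * (P * D) * Ring.inverse D := by rw [h3]
      _ = Ring.inverse (star D) * P := by
          rw [mul_assoc, mul_assoc, Ring.mul_inverse_cancel _ hU, mul_one]
  -- idempotency
  have hidem : Pg * Pg = Pg := by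
    calc Pg * Pg
        = Mg * P * (Ring.inverse D * (Mg * Mg * P)) * (Ring.inverse D * Mg) := by
          rw [hPgm]; noncomm_ring
      _ = Mg * (P * P) * (Ring.inverse D * Mg) := by rw [h2]; noncomm_ring
      _ = Pg := by rw [hP2, hPgm]; noncomm_ring
  -- key identity for the range
  have h5 : Pg * (Mg * P) = Mg * P := by
    calc Pg * (Mg * P)
        = Mg * P * (Ring.inverse D * (Mg * Mg * P)) := by rw [hPgm]; noncomm_ring
      _ = Mg * (P * P) := by rw [h2]; noncomm_ring
      _ = Mg * P := by rw [hP2]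
  have hPgapp : ∀ x, Pg x = Mg (P (Ring.inverse D (Mg x))) := by
    intro x; rw [hPgm]; rfl
  -- characterization of the image set
  have hset : (⇑Mg) '' ((LinearMap.range (P : Lp ℂ 2 μ →ₗ[ℂ] Lp ℂ 2 μ) : Submodule ℂ (Lp ℂ 2 μ)) : Set (Lp ℂ 2 μ))
      = {x | Pg x = x} := by
    ext x
    constructor
    · rintro ⟨φ, hφ, rfl⟩
      obtain ⟨z, rfl⟩ := hφ
      show Pg (Mg (P z)) = Mg (P z)
      have := congrArg (fun T : Lp ℂ 2 μ →L[ℂ] Lp ℂ 2 μ => T z) h5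
      simpa using this
    · intro hx
      refine ⟨P (Ring.inverse D (Mg x)), ⟨_, rfl⟩, ?_⟩
      rw [← hPgapp]; exact hx
  constructor
  · rw [hset]
    exact isClosed_eq Pg.continuous continuous_id
  refine ⟨hidem, ?_, ?_⟩
  · show star Pg = Pg
    rw [hPgm]
    simp only [star_mul, hA.star_eq, hsa.star_eq, ← Ring.inverse_star]
    rw [← mul_assoc (Ring.inverse (star D)) P Mg, ← h4]; noncomm_ring
  · ext x
    simp only [LinearMap.mem_range, Submodule.mem_map, LinearMap.mem_range,
      ContinuousLinearMap.coe_coe]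
    constructor
    · rintro ⟨y, rfl⟩
      exact ⟨P (Ring.inverse D (Mg y)), ⟨_, rfl⟩, (hPgapp y).symm⟩
    · rintro ⟨φ, ⟨z, rfl⟩, rfl⟩
      refine ⟨Mg (P z), ?_⟩
      have := congrArg (fun T : Lp ℂ 2 μ →L[ℂ] Lp ℂ 2 μ => T z) h5
      simpa using this
end
end

section
/- Let V be a finite-dimensional subspace of a space of measurable functions on E with V ∩ L_2(E, μ) = 0, in the sense that for every nonzero ψ ∈ V and every ε > 0 and bounded B, there is a bounded B_ε ⊇ B with ‖χ_B ψ‖ / ‖χ_{B_ε} ψ‖ < ε. Let P^{(n)} be the orthogonal projections in L_2(E,μ) onto √(g_n) V, where g_n : E → (0,1] satisfy √(g_n)V ⊂ L_2(E,μ), inf over n and over E_0 ∪ B of g_n is positive, and g_n → 1 uniformly on E_0 ∪ B for every bounded B. Then P^{(n)} → 0 in the strong operator topology. -/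
open ContinuousLinearMap Filter MeasureTheory
open scoped NNReal ENNReal Topology

noncomputable section

variable {H : Type*} [NormedAddCommGroup H] [InnerProductSpace ℂ H] [CompleteSpace H]
variable {ι : Type*}

namespace Stmt13Aux

open Set

variable {E : Type*} [MeasurableSpace E] {μ : MeasureTheory.Measure E}

/-- The `L²` seminorm of `f` restricted to `A`. -/
noncomputable def sn (μ : MeasureTheory.Measure E) (A : Set E) (f : E → ℂ) : ℝ≥0∞ :=
  eLpNorm (A.indicator f) 2 μ

lemma sn_mono_set {A A' : Set E} (h : A ⊆ A') (f : E → ℂ) : sn μ A f ≤ sn μ A' f := by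
  refine eLpNorm_mono fun x => ?_
  by_cases hx : x ∈ A
  · rw [Set.indicator_of_mem hx, Set.indicator_of_mem (h hx)]
  · rw [Set.indicator_of_notMem hx]
    simp [norm_nonneg]

lemma sn_congr {A : Set E} {f f' : E → ℂ} (h : f =ᵐ[μ] f') : sn μ A f = sn μ A f' := by
  refine eLpNorm_congr_ae (h.mono fun x hx => ?_)
  by_cases hxA : x ∈ A <;> simp [Set.indicator, hxA, hx]

lemma sn_smul (A : Set E) (a : ℂ) (f : E → ℂ) : sn μ A (a • f) = (‖a‖₊ : ℝ≥0∞) * sn μ A f := by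
  rw [sn, sn, ← enorm_eq_nnnorm, ← eLpNorm_const_smul]
  congr 1
  ext x
  by_cases hx : x ∈ A <;> simp [Set.indicator, hx]

lemma sn_le_eLpNorm (A : Set E) (f : E → ℂ) : sn μ A f ≤ eLpNorm f 2 μ :=
  eLpNorm_mono fun x => norm_indicator_le_norm_self f x

lemma sn_zero_iff {A : Set E} (hA : MeasurableSet A) {f : E → ℂ} (hf : Measurable f) :
    sn μ A f = 0 ↔ f =ᵐ[μ.restrict A] 0 := by
  rw [sn, eLpNorm_indicator_eq_eLpNorm_restrict hA,
    eLpNorm_eq_zero_iff hf.aestronglyMeasurable two_ne_zero]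

lemma sn_add_le {A : Set E} {f f' : E → ℂ} (hf : Measurable f) (hf' : Measurable f')
    (hA : MeasurableSet A) : sn μ A (f + f') ≤ sn μ A f + sn μ A f' := by
  have : A.indicator (f + f') = A.indicator f + A.indicator f' := by
    ext x
    by_cases hx : x ∈ A <;> simp [Set.indicator, hx]
  rw [sn, this]
  exact eLpNorm_add_le ((hf.indicator hA).aestronglyMeasurable)
    ((hf'.indicator hA).aestronglyMeasurable) one_le_two

lemma antitone_nat_stab (f : ℕ → ℕ) (hf : ∀ m n, m ≤ n → f n ≤ f m) :
    ∃ M, ∀ n, M ≤ n → f n = f M := by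
  obtain ⟨M, hM⟩ : ∃ M, ∀ n, f M ≤ f n := ⟨Function.argmin f,
    fun n => Function.argmin_le f n⟩
  exact ⟨M, fun n hn => le_antisymm (hf M n hn) (hM n)⟩

lemma coord_le_norm {d : ℕ} (c : EuclideanSpace ℂ (Fin d)) (i : Fin d) : ‖c i‖ ≤ ‖c‖ := by
  rw [EuclideanSpace.norm_eq]
  calc ‖c i‖ = Real.sqrt (‖c i‖ ^ 2) := (Real.sqrt_sq (norm_nonneg _)).symm
    _ ≤ _ := Real.sqrt_le_sqrt (Finset.single_le_sum
        (fun j _ => sq_nonneg ‖c j‖) (Finset.mem_univ i))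

end Stmt13Aux

open Stmt13Aux

set_option maxHeartbeats 2000000 in
/-- if `V` is a finite-dimensional space of measurable functions with
`V ∩ L2 = 0` in the quantitative sense below, and `W n` is the subspace `sqrt (g n) V`
of `L2`, then the orthogonal projections onto `W n` tend to `0` strongly. -/
theorem stmt13 {E : Type*} [TopologicalSpace E] [PolishSpace E] [LocallyCompactSpace E]
    [MeasurableSpace E] [BorelSpace E] {μ : Measure E} [SigmaFinite μ]
    (E0 : Set E) (V : Submodule ℂ (E → ℂ)) [FiniteDimensional ℂ V]
    (hVmeas : ∀ ψ ∈ V, Measurable ψ)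
    (hVL2 : ∀ ψ ∈ V, ψ ≠ 0 → ∀ ε : ℝ, 0 < ε → ∀ B : Set E, IsCompact (closure B) →
      ∃ Bε : Set E, B ⊆ Bε ∧ MeasurableSet Bε ∧ IsCompact (closure Bε) ∧
        eLpNorm (B.indicator ψ) 2 μ ≤ ENNReal.ofReal ε * eLpNorm (Bε.indicator ψ) 2 μ)
    (g : ℕ → E → ℝ) (hgm : ∀ n, Measurable (g n))
    (hg0 : ∀ n x, 0 < g n x) (hg1 : ∀ n x, g n x ≤ 1)
    (hginf : ∀ B : Set E, IsCompact (closure B) →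
      ∃ c : ℝ, 0 < c ∧ ∀ n, ∀ x ∈ E0 ∪ B, c ≤ g n x)
    (hunif : ∀ B : Set E, IsCompact (closure B) →
      TendstoUniformlyOn (fun n x => g n x) (fun _ => (1 : ℝ)) atTop (E0 ∪ B))
    (W : ℕ → Submodule ℂ (Lp ℂ 2 μ)) [∀ n, (W n).HasOrthogonalProjection]
    (hWmem : ∀ n (φ : Lp ℂ 2 μ), φ ∈ W n ↔
      ∃ ψ ∈ V, (φ : E → ℂ) =ᵐ[μ] fun x => (Real.sqrt (g n x) : ℂ) * ψ x)
    (hWsub : ∀ n, ∀ ψ ∈ V, ∃ φ : Lp ℂ 2 μ,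
      (φ : E → ℂ) =ᵐ[μ] fun x => (Real.sqrt (g n x) : ℂ) * ψ x) :
    ∀ φ : Lp ℂ 2 μ, Tendsto (fun n => projCLM (W n) φ) atTop (𝓝 0) := by
  classical
  -- compact exhaustion
  obtain ⟨CE⟩ : Nonempty (CompactExhaustion E) := inferInstance
  have hCEm : ∀ n, MeasurableSet (CE n) := fun n => (CE.isCompact n).isClosed.measurableSet
  have hCEc : ∀ n : ℕ, IsCompact (closure (CE n)) := fun n => by
    rw [(CE.isCompact n).isClosed.closure_eq]; exact CE.isCompact n
  -- finiteness of local L² seminorms of elements of V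
  have fin : ∀ A : Set E, IsCompact (closure A) → ∀ ψ ∈ V, sn μ A ψ ≠ ⊤ := by
    intro A hA ψ hψ
    obtain ⟨c, hc, hcg⟩ := hginf A hA
    obtain ⟨φ₀, hφ₀⟩ := hWsub 0 ψ hψ
    set s := Real.sqrt c with hs_def
    have hs : 0 < s := Real.sqrt_pos.2 hc
    have hmono : sn μ A ψ ≤
        eLpNorm ((s⁻¹ : ℂ) • fun x => (Real.sqrt (g 0 x) : ℂ) * ψ x) 2 μ := by
      refine eLpNorm_mono fun x => ?_
      by_cases hx : x ∈ A
      · rw [Set.indicator_of_mem hx]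
        have h1 : s ≤ Real.sqrt (g 0 x) := Real.sqrt_le_sqrt (hcg 0 x (Or.inr hx))
        simp only [Pi.smul_apply, smul_eq_mul, norm_mul, Complex.norm_real]
        rw [norm_inv, Complex.norm_real]
        rw [Real.norm_eq_abs, Real.norm_eq_abs, abs_of_pos hs,
          abs_of_nonneg (Real.sqrt_nonneg _)]
        calc ‖ψ x‖ = s⁻¹ * (s * ‖ψ x‖) := by field_simp
          _ ≤ s⁻¹ * (Real.sqrt (g 0 x) * ‖ψ x‖) := by
              have := mul_le_mul_of_nonneg_right h1 (norm_nonneg (ψ x))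
              exact mul_le_mul_of_nonneg_left this (inv_nonneg.2 hs.le)
      · rw [Set.indicator_of_notMem hx]
        simp only [norm_zero, Pi.smul_apply, smul_eq_mul, norm_mul]
        positivity
    rw [eLpNorm_const_smul, enorm_eq_nnnorm] at hmono
    have : eLpNorm (fun x => (Real.sqrt (g 0 x) : ℂ) * ψ x) 2 μ ≠ ⊤ := by
      rw [← eLpNorm_congr_ae hφ₀]
      exact Lp.eLpNorm_ne_top φ₀
    exact ne_top_of_le_ne_top (ENNReal.mul_ne_top ENNReal.coe_ne_top this) hmono
  -- a basis of V, and the parametrization of V by Euclidean space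
  set d := Module.finrank ℂ V with hd_def
  have b : Module.Basis (Fin d) ℂ V := Module.finBasis ℂ V
  set Ψ : EuclideanSpace ℂ (Fin d) → (E → ℂ) :=
    fun c => ∑ i, c i • ((b i : E → ℂ)) with hΨ_def
  have hΨcoe : ∀ c, Ψ c = ((∑ i, c i • b i : V) : E → ℂ) := by
    intro c
    rw [hΨ_def]
    push_cast
    rfl
  have hΨV : ∀ c, Ψ c ∈ V := fun c => by
    rw [hΨcoe]; exact SetLike.coe_mem _
  have hΨmeas : ∀ c, Measurable (Ψ c) := fun c => hVmeas _ (hΨV c)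
  have hΨadd : ∀ c c', Ψ (c + c') = Ψ c + Ψ c' := by
    intro c c'
    rw [hΨ_def]
    calc (∑ i, ((c + c') i) • ((b i : E → ℂ)))
        = ∑ i, (c i • ((b i : E → ℂ)) + c' i • ((b i : E → ℂ))) := by
          refine Finset.sum_congr rfl fun i _ => ?_
          have h : (c + c') i = c i + c' i := rfl
          rw [h, add_smul]
      _ = _ := Finset.sum_add_distrib
  have hΨsmul : ∀ (a : ℂ) c, Ψ (a • c) = a • Ψ c := by
    intro a c
    rw [hΨ_def]
    calc (∑ i, ((a • c) i) • ((b i : E → ℂ)))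
        = ∑ i, a • (c i • ((b i : E → ℂ))) := by
          refine Finset.sum_congr rfl fun i _ => ?_
          have h : (a • c) i = a * c i := rfl
          rw [h, mul_smul]
      _ = _ := Finset.smul_sum.symm
  have hΨzero : Ψ 0 = 0 := by
    rw [hΨ_def]; funext x; simp
  have hΨinj : ∀ c, Ψ c = 0 → c = 0 := by
    intro c hc
    rw [hΨcoe] at hc
    have h0 : (∑ i, c i • b i : V) = 0 := by
      exact ZeroMemClass.coe_eq_zero.mp hc
    have := Fintype.linearIndependent_iff.mp b.linearIndependent (fun i => c i) h0
    ext i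
    exact this i
  have hΨsurj : ∀ ψ ∈ V, ∃ c, Ψ c = ψ := by
    intro ψ hψ
    refine ⟨(WithLp.toLp 2 (fun i => b.repr ⟨ψ, hψ⟩ i) : EuclideanSpace ℂ (Fin d)), ?_⟩
    rw [hΨcoe]
    have : (∑ i, b.repr ⟨ψ, hψ⟩ i • b i : V) = ⟨ψ, hψ⟩ := b.sum_repr ⟨ψ, hψ⟩
    rw [this]
  -- the null subspaces
  set Knull : Submodule ℂ (EuclideanSpace ℂ (Fin d)) :=
    { carrier := {c | Ψ c =ᵐ[μ] 0}
      add_mem' := by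
        intro a b ha hb
        simp only [Set.mem_setOf_eq] at *
        rw [hΨadd]
        filter_upwards [ha, hb] with x hx1 hx2
        simp [hx1, hx2]
      zero_mem' := by simp only [Set.mem_setOf_eq, hΨzero]; rfl
      smul_mem' := by
        intro a c hc
        simp only [Set.mem_setOf_eq] at *
        rw [hΨsmul]
        filter_upwards [hc] with x hx
        simp [hx] } with hKnull_def
  have hKnull_mem : ∀ c, c ∈ Knull ↔ Ψ c =ᵐ[μ] 0 := fun c => Iff.rfl
  set Unull : ℕ → Submodule ℂ (EuclideanSpace ℂ (Fin d)) := fun n =>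
    { carrier := {c | Ψ c =ᵐ[μ.restrict (CE n)] 0}
      add_mem' := by
        intro a b ha hb
        simp only [Set.mem_setOf_eq] at *
        rw [hΨadd]
        filter_upwards [ha, hb] with x hx1 hx2
        simp [hx1, hx2]
      zero_mem' := by simp only [Set.mem_setOf_eq, hΨzero]; rfl
      smul_mem' := by
        intro a c hc
        simp only [Set.mem_setOf_eq] at *
        rw [hΨsmul]
        filter_upwards [hc] with x hx
        simp [hx] } with hUnull_def
  have hUnull_mem : ∀ n c, c ∈ Unull n ↔ Ψ c =ᵐ[μ.restrict (CE n)] 0 := fun n c => Iff.rfl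
  have hUanti : ∀ {m n : ℕ}, m ≤ n → Unull n ≤ Unull m := by
    intro m n hmn c hc
    rw [hUnull_mem] at *
    exact hc.filter_mono (MeasureTheory.ae_mono (Measure.restrict_mono (CE.subset hmn) le_rfl))
  obtain ⟨M, hM⟩ := antitone_nat_stab (fun n => Module.finrank ℂ (Unull n))
    (fun m n hmn => Submodule.finrank_mono (hUanti hmn))
  have hUM : ∀ c, c ∈ Unull M → c ∈ Knull := by
    intro c hc
    have hall : ∀ n, c ∈ Unull n := by
      intro n
      rcases le_total n M with h | h
      · exact hUanti h hc
      · have : Unull n = Unull M :=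
          Submodule.eq_of_le_of_finrank_le (hUanti h) (le_of_eq (hM n h).symm)
        rw [this]; exact hc
    rw [hKnull_mem]
    have hnull : ∀ n : ℕ, μ ({x | Ψ c x ≠ 0} ∩ CE n) = 0 := by
      intro n
      have := (hUnull_mem n c).mp (hall n)
      rw [EventuallyEq, ae_iff, Measure.restrict_apply' (hCEm n)] at this
      exact this
    have : μ {x | Ψ c x ≠ 0} = 0 := by
      have hU : {x | Ψ c x ≠ 0} = ⋃ n, ({x | Ψ c x ≠ 0} ∩ CE n) := by
        rw [← Set.inter_iUnion, CE.iUnion_eq, Set.inter_univ]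
      rw [hU]
      exact measure_iUnion_null hnull
    rw [EventuallyEq, ae_iff]
    exact this
  -- continuity of the local seminorms in the coordinates
  have hFcont : ∀ A : Set E, MeasurableSet A → IsCompact (closure A) →
      Continuous (fun c => (sn μ A (Ψ c)).toReal) := by
    intro A hA hAc
    set F : EuclideanSpace ℂ (Fin d) → ℝ := fun c => (sn μ A (Ψ c)).toReal with hF_def
    have hfinΨ : ∀ c, sn μ A (Ψ c) ≠ ⊤ := fun c => fin A hAc _ (hΨV c)
    set G : ℝ := ∑ i, (sn μ A ((b i : E → ℂ))).toReal with hG_def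
    have hG0 : 0 ≤ G := Finset.sum_nonneg fun i _ => ENNReal.toReal_nonneg
    have hFsum : ∀ c, F c ≤ G * ‖c‖ := by
      intro c
      have hind : A.indicator (Ψ c) = ∑ i, A.indicator (fun x => c i • (b i : E → ℂ) x) := by
        funext x
        by_cases hx : x ∈ A
        · rw [Set.indicator_of_mem hx, hΨ_def]
          simp only [Finset.sum_apply, Pi.smul_apply, Set.indicator_of_mem hx]
        · rw [Set.indicator_of_notMem hx]
          rw [Finset.sum_apply]
          symm
          refine Finset.sum_eq_zero fun i _ => ?_
          rw [Set.indicator_of_notMem hx]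
      have h1 : sn μ A (Ψ c) ≤ ∑ i, (‖c i‖₊ : ℝ≥0∞) * sn μ A ((b i : E → ℂ)) := by
        rw [sn, hind]
        refine le_trans (eLpNorm_sum_le (fun i _ =>
          (((hVmeas _ (SetLike.coe_mem (b i))).const_smul (c i)).indicator hA).aestronglyMeasurable)
          one_le_two) ?_
        refine Finset.sum_le_sum fun i _ => ?_
        exact le_of_eq (sn_smul A (c i) ((b i : E → ℂ)))
      have hsum_ne : (∑ i, (‖c i‖₊ : ℝ≥0∞) * sn μ A ((b i : E → ℂ))) ≠ ⊤ := by
        refine (ENNReal.sum_lt_top.mpr fun i _ => ?_).ne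
        exact (ENNReal.mul_lt_top ENNReal.coe_lt_top
          (lt_top_iff_ne_top.mpr (fin A hAc _ (SetLike.coe_mem (b i)))))
      calc F c ≤ (∑ i, (‖c i‖₊ : ℝ≥0∞) * sn μ A ((b i : E → ℂ))).toReal :=
            ENNReal.toReal_mono hsum_ne h1
        _ = ∑ i, ‖c i‖ * (sn μ A ((b i : E → ℂ))).toReal := by
            rw [ENNReal.toReal_sum fun i _ => (ENNReal.mul_lt_top ENNReal.coe_lt_top
              (lt_top_iff_ne_top.mpr (fin A hAc _ (SetLike.coe_mem (b i))))).ne]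
            refine Finset.sum_congr rfl fun i _ => ?_
            rw [ENNReal.toReal_mul, ENNReal.coe_toReal, coe_nnnorm]
        _ ≤ ∑ i, ‖c‖ * (sn μ A ((b i : E → ℂ))).toReal := by
            refine Finset.sum_le_sum fun i _ => ?_
            exact mul_le_mul_of_nonneg_right (coord_le_norm c i) ENNReal.toReal_nonneg
        _ = G * ‖c‖ := by rw [← Finset.mul_sum, mul_comm]
    have hFtri : ∀ c c', F (c + c') ≤ F c + F c' := by
      intro c c'
      have h := sn_add_le (μ := μ) (hΨmeas c) (hΨmeas c') hA
      rw [hF_def]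
      simp only
      rw [hΨadd]
      calc (sn μ A (Ψ c + Ψ c')).toReal
          ≤ (sn μ A (Ψ c) + sn μ A (Ψ c')).toReal :=
            ENNReal.toReal_mono (ENNReal.add_ne_top.mpr ⟨hfinΨ c, hfinΨ c'⟩) h
        _ = F c + F c' := ENNReal.toReal_add (hfinΨ c) (hfinΨ c')
    have hlip : ∀ c c', F c - F c' ≤ G * ‖c - c'‖ := by
      intro c c'
      have h1 := hFtri (c - c') c'
      rw [sub_add_cancel] at h1
      have h2 := hFsum (c - c')
      linarith
    have : LipschitzWith ⟨G, hG0⟩ F := by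
      refine LipschitzWith.of_dist_le_mul fun c c' => ?_
      rw [Real.dist_eq, dist_eq_norm, abs_sub_le_iff]
      constructor
      · exact hlip c c'
      · have := hlip c' c
        rwa [norm_sub_rev] at this
    exact this.continuous
  -- THE CLAIM
  have claim : ∀ ε : ℝ, 0 < ε → ∀ B : Set E, MeasurableSet B → IsCompact (closure B) →
      ∃ B' : Set E, B ⊆ B' ∧ MeasurableSet B' ∧ IsCompact (closure B') ∧
        ∀ ψ ∈ V, (sn μ B ψ).toReal ≤ ε * (sn μ B' ψ).toReal := by
    intro ε hε B hBm hBc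
    set B₀ := B ∪ CE M with hB₀_def
    have hB₀m : MeasurableSet B₀ := hBm.union (hCEm M)
    have hB₀c : IsCompact (closure B₀) := by
      rw [hB₀_def, closure_union]
      exact hBc.union (hCEc M)
    have hchoice : ∀ c : EuclideanSpace ℂ (Fin d), ∃ Bcc : Set E,
        B₀ ⊆ Bcc ∧ MeasurableSet Bcc ∧ IsCompact (closure Bcc) ∧
        (‖c‖ = 1 → eLpNorm (B₀.indicator (Ψ c)) 2 μ ≤
          ENNReal.ofReal (ε/2) * eLpNorm (Bcc.indicator (Ψ c)) 2 μ) := by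
      intro c
      by_cases hc : ‖c‖ = 1
      · have hcne : Ψ c ≠ 0 := by
          intro h
          have h2 := hΨinj c h
          rw [h2] at hc
          simp at hc
        obtain ⟨Bcc, h1, h2, h3, h4⟩ := hVL2 (Ψ c) (hΨV c) hcne (ε/2) (by linarith) B₀ hB₀c
        exact ⟨Bcc, h1, h2, h3, fun _ => h4⟩
      · exact ⟨B₀, subset_rfl, hB₀m, hB₀c, fun h => absurd h hc⟩
    choose Bc hBc₀ hBcm hBcc hBcineq using hchoice
    set S : Set (EuclideanSpace ℂ (Fin d)) :=
      Metric.sphere 0 1 ∩ (Knullᗮ : Set (EuclideanSpace ℂ (Fin d))) with hS_def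
    have hScomp : IsCompact S :=
      (isCompact_sphere _ _).inter_right (Submodule.closed_of_finiteDimensional _)
    have hSnorm : ∀ c ∈ S, ‖c‖ = 1 := by
      intro c hc
      have h1 := hc.1
      rwa [Metric.mem_sphere, dist_zero_right] at h1
    have hSnotK : ∀ c ∈ S, c ∉ Knull := by
      intro c hc hK
      have h1 : c ∈ Knull ⊓ Knullᗮ := ⟨hK, hc.2⟩
      rw [Submodule.inf_orthogonal_eq_bot, Submodule.mem_bot] at h1
      have h2 := hSnorm c hc
      rw [h1] at h2
      simp at h2
    have hpos : ∀ c ∈ S, 0 < (sn μ (Bc c) (Ψ c)).toReal := by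
      intro c hc
      have hfin' : sn μ (Bc c) (Ψ c) ≠ ⊤ := fin _ (hBcc c) _ (hΨV c)
      have hne : sn μ (Bc c) (Ψ c) ≠ 0 := by
        intro h0
        have hle : sn μ (CE M) (Ψ c) ≤ sn μ (Bc c) (Ψ c) :=
          sn_mono_set ((Set.subset_union_right).trans (hBc₀ c)) _
        have hz : sn μ (CE M) (Ψ c) = 0 := le_antisymm (h0 ▸ hle) zero_le
        have hz2 := (sn_zero_iff (hCEm M) (hΨmeas c)).mp hz
        exact hSnotK c hc (hUM c ((hUnull_mem M c).mpr hz2))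
      exact ENNReal.toReal_pos hne hfin'
    set O : EuclideanSpace ℂ (Fin d) → Set (EuclideanSpace ℂ (Fin d)) := fun c =>
      {c' | (sn μ B (Ψ c')).toReal < ε * (sn μ (Bc c) (Ψ c')).toReal} with hO_def
    have hOopen : ∀ c, IsOpen (O c) :=
      fun c => isOpen_lt (hFcont B hBm hBc) (continuous_const.mul (hFcont (Bc c) (hBcm c) (hBcc c)))
    have hOmem : ∀ c ∈ S, c ∈ O c := by
      intro c hc
      have h4 := hBcineq c (hSnorm c hc)
      have h5 : sn μ B (Ψ c) ≤ ENNReal.ofReal (ε/2) * sn μ (Bc c) (Ψ c) :=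
        le_trans (sn_mono_set Set.subset_union_left _) h4
      have hfin' : sn μ (Bc c) (Ψ c) ≠ ⊤ := fin _ (hBcc c) _ (hΨV c)
      have h6 : (sn μ B (Ψ c)).toReal ≤ (ε/2) * (sn μ (Bc c) (Ψ c)).toReal := by
        have hrhs : ENNReal.ofReal (ε/2) * sn μ (Bc c) (Ψ c) ≠ ⊤ :=
          ENNReal.mul_ne_top ENNReal.ofReal_ne_top hfin'
        have h7 := ENNReal.toReal_mono hrhs h5
        rwa [ENNReal.toReal_mul, ENNReal.toReal_ofReal (by linarith)] at h7
      have hp := hpos c hc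
      simp only [hO_def, Set.mem_setOf_eq]
      nlinarith [hp]
    obtain ⟨t, ht⟩ := hScomp.elim_finite_subcover O hOopen
      (fun c hc => Set.mem_iUnion.mpr ⟨c, hOmem c hc⟩)
    set B' := B₀ ∪ ⋃ c ∈ t, Bc c with hB'_def
    have hBB' : B ⊆ B' := subset_trans Set.subset_union_left Set.subset_union_left
    have hB'm : MeasurableSet B' :=
      hB₀m.union (MeasurableSet.biUnion t.countable_toSet fun c _ => hBcm c)
    have hB'c : IsCompact (closure B') := by
      have hcomp : IsCompact (closure B₀ ∪ ⋃ c ∈ (t : Set _), closure (Bc c)) :=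
        hB₀c.union (t.finite_toSet.isCompact_biUnion fun c _ => hBcc c)
      have hcl : IsClosed (closure B₀ ∪ ⋃ c ∈ (t : Set _), closure (Bc c)) :=
        isClosed_closure.union (t.finite_toSet.isClosed_biUnion fun c _ => isClosed_closure)
      have hsub : B' ⊆ closure B₀ ∪ ⋃ c ∈ (t : Set _), closure (Bc c) :=
        Set.union_subset_union subset_closure (Set.iUnion₂_mono fun c _ => subset_closure)
      exact hcomp.of_isClosed_subset isClosed_closure (closure_minimal hsub hcl)
    refine ⟨B', hBB', hB'm, hB'c, ?_⟩
    intro ψ hψ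
    obtain ⟨c, hc⟩ := hΨsurj ψ hψ
    rw [← hc]
    set k := (Knull.orthogonalProjectionOnto c : EuclideanSpace ℂ (Fin d)) with hk_def
    have hkK : k ∈ Knull := SetLike.coe_mem _
    set c2 := c - k with hc2_def
    have hc2K : c2 ∈ Knullᗮ := Submodule.sub_starProjection_mem_orthogonal (K := Knull) c
    have haeq : Ψ c =ᵐ[μ] Ψ c2 := by
      have heq : Ψ c = Ψ c2 + Ψ k := by
        rw [← hΨadd, hc2_def, sub_add_cancel]
      rw [heq]
      have hk0 : Ψ k =ᵐ[μ] 0 := (hKnull_mem k).mp hkK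
      filter_upwards [hk0] with x hx
      simp [hx]
    rcases eq_or_ne c2 0 with h0 | h0
    · have hae0 : Ψ c =ᵐ[μ] 0 := haeq.trans (by rw [h0, hΨzero])
      have hB0 : sn μ B (Ψ c) = 0 := by
        rw [sn_congr hae0]
        simp [sn]
      rw [hB0]
      simp only [ENNReal.toReal_zero]
      exact mul_nonneg hε.le ENNReal.toReal_nonneg
    · set r := ‖c2‖ with hr_def
      have hr : 0 < r := norm_pos_iff.mpr h0
      have hrC : ((r : ℂ)) ≠ 0 := by exact_mod_cast hr.ne'
      set u := ((r : ℂ))⁻¹ • c2 with hu_def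
      have hcu : c2 = (r : ℂ) • u := by rw [hu_def, smul_inv_smul₀ hrC]
      have hu_norm : ‖u‖ = 1 := by
        rw [hu_def, norm_smul, norm_inv, Complex.norm_real, Real.norm_eq_abs, abs_of_pos hr]
        field_simp
        exact hr_def.symm
      have huS : u ∈ S := by
        refine ⟨?_, Submodule.smul_mem _ _ hc2K⟩
        rw [Metric.mem_sphere, dist_zero_right]
        exact hu_norm
      obtain ⟨i, hit, hiO⟩ := Set.mem_iUnion₂.mp (ht huS)
      have hkey_u : (sn μ B (Ψ u)).toReal < ε * (sn μ (Bc i) (Ψ u)).toReal := hiO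
      have hBc_sub : Bc i ⊆ B' := by
        refine subset_trans ?_ Set.subset_union_right
        exact Set.subset_biUnion_of_mem hit
      have hmono2 : (sn μ (Bc i) (Ψ u)).toReal ≤ (sn μ B' (Ψ u)).toReal :=
        ENNReal.toReal_mono (fin _ hB'c _ (hΨV u)) (sn_mono_set hBc_sub _)
      have hscale : ∀ A : Set E, (sn μ A (Ψ c2)).toReal = r * (sn μ A (Ψ u)).toReal := by
        intro A
        rw [hcu, hΨsmul, sn_smul, ENNReal.toReal_mul, ENNReal.coe_toReal, coe_nnnorm]
        congr 1
        rw [Complex.norm_real, Real.norm_eq_abs, abs_of_pos hr]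
      have hcongr : ∀ A : Set E, sn μ A (Ψ c) = sn μ A (Ψ c2) := fun A => sn_congr haeq
      rw [hcongr B, hcongr B', hscale B, hscale B']
      calc r * (sn μ B (Ψ u)).toReal ≤ r * (ε * (sn μ B' (Ψ u)).toReal) := by
            refine mul_le_mul_of_nonneg_left ?_ hr.le
            exact le_trans hkey_u.le (mul_le_mul_of_nonneg_left hmono2 hε.le)
        _ = ε * (r * (sn μ B' (Ψ u)).toReal) := by ring
  -- THE KEY ESTIMATE
  have key : ∀ εk : ℝ, 0 < εk → ∀ B : Set E, MeasurableSet B → IsCompact (closure B) →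
      ∃ N : ℕ, ∀ n, N ≤ n → ∀ χ : Lp ℂ 2 μ, (χ : E → ℂ) =ᵐ[μ] B.indicator (χ : E → ℂ) →
        ‖projCLM (W n) χ‖ ≤ εk * ‖χ‖ := by
    intro εk hεk B hBm hBc
    obtain ⟨B', hBB', hB'm, hB'c, hclaim⟩ := claim (εk/2) (by linarith) B hBm hBc
    have hNev := (Metric.tendstoUniformlyOn_iff.mp (hunif B' hB'c)) (1/2) (by norm_num)
    obtain ⟨N, hN⟩ := eventually_atTop.mp hNev
    refine ⟨N, fun n hn χ hχ => ?_⟩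
    have hglow : ∀ x ∈ E0 ∪ B', (1/2 : ℝ) ≤ g n x := by
      intro x hx
      have h1 := hN n hn x hx
      rw [Real.dist_eq] at h1
      have h2 := abs_lt.mp h1
      linarith [h2.1, h2.2]
    set P : Lp ℂ 2 μ := projCLM (W n) χ with hP_def
    have hP_coe : (((W n).orthogonalProjectionOnto χ : W n) : Lp ℂ 2 μ) = P := rfl
    have hPmem : P ∈ W n := by rw [← hP_coe]; exact SetLike.coe_mem _
    obtain ⟨ψ, hψV, hPae⟩ := (hWmem n P).mp hPmem
    set sq : E → ℂ := fun x => (Real.sqrt (g n x) : ℂ) * ψ x with hsq_def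
    have hψm : Measurable ψ := hVmeas ψ hψV
    have hsqm : Measurable sq :=
      (Complex.measurable_ofReal.comp ((Real.continuous_sqrt.measurable).comp (hgm n))).mul hψm
    have hsq_eLp : eLpNorm sq 2 μ = eLpNorm (P : E → ℂ) 2 μ := (eLpNorm_congr_ae hPae).symm
    have hsq_ne : eLpNorm sq 2 μ ≠ ⊤ := by rw [hsq_eLp]; exact Lp.eLpNorm_ne_top P
    have hP_norm : ‖P‖ = (eLpNorm sq 2 μ).toReal := by rw [Lp.norm_def, hsq_eLp]
    have hinner : (inner ℂ χ P : ℂ) = ((‖P‖ : ℂ))^2 := by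
      have h1 : inner ℂ (χ - ((W n).orthogonalProjectionOnto χ : Lp ℂ 2 μ)) P = 0 :=
        Submodule.starProjection_inner_eq_zero (K := W n) χ P hPmem
      rw [inner_sub_left, sub_eq_zero] at h1
      rw [hP_coe] at h1
      rw [h1, inner_self_eq_norm_sq_to_K]
      norm_cast
    have habs : ‖P‖^2 = ‖(inner ℂ χ P : ℂ)‖ := by
      rw [hinner, norm_pow, Complex.norm_real, norm_norm]
    have husq : MemLp (B.indicator sq) 2 μ := by
      refine ⟨(hsqm.indicator hBm).aestronglyMeasurable, ?_⟩
      calc eLpNorm (B.indicator sq) 2 μ ≤ eLpNorm sq 2 μ := sn_le_eLpNorm B sq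
        _ < ⊤ := lt_top_iff_ne_top.mpr hsq_ne
    set u : Lp ℂ 2 μ := husq.toLp _ with hu_def
    have hu_norm : ‖u‖ = (sn μ B sq).toReal := Lp.norm_toLp _ _
    have hiueq : (inner ℂ χ P : ℂ) = inner ℂ χ u := by
      rw [L2.inner_def, L2.inner_def]
      refine integral_congr_ae ?_
      filter_upwards [hPae, husq.coeFn_toLp, hχ] with x h1 h2 h3
      rw [h1, h2]
      by_cases hx : x ∈ B
      · rw [Set.indicator_of_mem hx]
      · rw [Set.indicator_of_notMem hx, h3, Set.indicator_of_notMem hx]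
        simp [inner_zero_left]
    have hCS : ‖(inner ℂ χ P : ℂ)‖ ≤ ‖χ‖ * (sn μ B sq).toReal := by
      rw [hiueq, ← hu_norm]
      exact norm_inner_le_norm χ u
    have h3 : (sn μ B sq).toReal ≤ (sn μ B ψ).toReal := by
      refine ENNReal.toReal_mono (fin B hBc ψ hψV) (eLpNorm_mono fun x => ?_)
      by_cases hx : x ∈ B
      · rw [Set.indicator_of_mem hx, Set.indicator_of_mem hx, hsq_def]
        rw [norm_mul, Complex.norm_real, Real.norm_eq_abs,
          abs_of_nonneg (Real.sqrt_nonneg _)]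
        have hle1 : Real.sqrt (g n x) ≤ 1 := Real.sqrt_le_one.mpr (hg1 n x)
        nlinarith [norm_nonneg (ψ x), Real.sqrt_nonneg (g n x)]
      · rw [Set.indicator_of_notMem hx, Set.indicator_of_notMem hx]
    have h5 : (sn μ B' ψ).toReal ≤ Real.sqrt 2 * (sn μ B' sq).toReal := by
      have hmono : sn μ B' ψ ≤ eLpNorm (((Real.sqrt 2 : ℝ) : ℂ) • B'.indicator sq) 2 μ := by
        refine eLpNorm_mono fun x => ?_
        by_cases hx : x ∈ B'
        · rw [Set.indicator_of_mem hx]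
          simp only [Pi.smul_apply, smul_eq_mul, Set.indicator_of_mem hx, hsq_def]
          rw [norm_mul, norm_mul, Complex.norm_real, Complex.norm_real,
            Real.norm_eq_abs, Real.norm_eq_abs, abs_of_nonneg (Real.sqrt_nonneg 2),
            abs_of_nonneg (Real.sqrt_nonneg _), ← mul_assoc]
          have hg2 : (1:ℝ) ≤ Real.sqrt 2 * Real.sqrt (g n x) := by
            have h12 : (1/2 : ℝ) ≤ g n x := hglow x (Or.inr hx)
            have hsq12 : Real.sqrt (1/2) ≤ Real.sqrt (g n x) := Real.sqrt_le_sqrt h12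
            have h2' : Real.sqrt 2 * Real.sqrt (1/2) = 1 := by
              rw [← Real.sqrt_mul (by norm_num)]
              norm_num
            nlinarith [Real.sqrt_nonneg 2]
          nlinarith [norm_nonneg (ψ x)]
        · rw [Set.indicator_of_notMem hx]
          simp only [Pi.smul_apply, Set.indicator_of_notMem hx, smul_zero, norm_zero,
            norm_nonneg]
          exact le_rfl
      rw [eLpNorm_const_smul, enorm_eq_nnnorm] at hmono
      have hB'sq_ne : sn μ B' sq ≠ ⊤ := ne_top_of_le_ne_top hsq_ne (sn_le_eLpNorm B' sq)
      have hrhs_ne : (‖((Real.sqrt 2 : ℝ) : ℂ)‖₊ : ℝ≥0∞) * eLpNorm (B'.indicator sq) 2 μ ≠ ⊤ :=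
        ENNReal.mul_ne_top ENNReal.coe_ne_top hB'sq_ne
      have h7 := ENNReal.toReal_mono hrhs_ne hmono
      rwa [ENNReal.toReal_mul, ENNReal.coe_toReal, coe_nnnorm, Complex.norm_real,
        Real.norm_eq_abs, abs_of_nonneg (Real.sqrt_nonneg 2)] at h7
    have h6 : (sn μ B' sq).toReal ≤ ‖P‖ := by
      rw [hP_norm]
      exact ENNReal.toReal_mono hsq_ne (sn_le_eLpNorm B' sq)
    have hfinal : ‖P‖^2 ≤ (εk/2) * Real.sqrt 2 * ‖χ‖ * ‖P‖ := by
      calc ‖P‖^2 = ‖(inner ℂ χ P : ℂ)‖ := habs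
        _ ≤ ‖χ‖ * (sn μ B sq).toReal := hCS
        _ ≤ ‖χ‖ * (sn μ B ψ).toReal := mul_le_mul_of_nonneg_left h3 (norm_nonneg χ)
        _ ≤ ‖χ‖ * ((εk/2) * (sn μ B' ψ).toReal) :=
            mul_le_mul_of_nonneg_left (hclaim ψ hψV) (norm_nonneg χ)
        _ ≤ ‖χ‖ * ((εk/2) * (Real.sqrt 2 * (sn μ B' sq).toReal)) := by
            refine mul_le_mul_of_nonneg_left ?_ (norm_nonneg χ)
            exact mul_le_mul_of_nonneg_left h5 (by linarith)
        _ ≤ ‖χ‖ * ((εk/2) * (Real.sqrt 2 * ‖P‖)) := by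
            refine mul_le_mul_of_nonneg_left ?_ (norm_nonneg χ)
            refine mul_le_mul_of_nonneg_left ?_ (by linarith)
            exact mul_le_mul_of_nonneg_left h6 (Real.sqrt_nonneg 2)
        _ = (εk/2) * Real.sqrt 2 * ‖χ‖ * ‖P‖ := by ring
    rcases eq_or_lt_of_le (norm_nonneg P) with hP0 | hP0
    · rw [← hP0]
      positivity
    · have h7 : ‖P‖ ≤ (εk/2) * Real.sqrt 2 * ‖χ‖ := by
        rw [pow_two] at hfinal
        exact le_of_mul_le_mul_right hfinal hP0
      have hs2 : Real.sqrt 2 ≤ 2 := by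
        nlinarith [Real.sq_sqrt (show (0:ℝ) ≤ 2 by norm_num), Real.sqrt_nonneg 2]
      calc ‖P‖ ≤ (εk/2) * Real.sqrt 2 * ‖χ‖ := h7
        _ ≤ (εk/2) * 2 * ‖χ‖ := by
            refine mul_le_mul_of_nonneg_right ?_ (norm_nonneg χ)
            exact mul_le_mul_of_nonneg_left hs2 (by linarith)
        _ = εk * ‖χ‖ := by ring
  -- CONCLUSION
  intro φ
  rw [NormedAddCommGroup.tendsto_nhds_zero]
  intro ε hε
  have hcontr : ∀ n (x : Lp ℂ 2 μ), ‖projCLM (W n) x‖ ≤ ‖x‖ := by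
    intro n x
    have h1 : projCLM (W n) x = (((W n).orthogonalProjectionOnto x : W n) : Lp ℂ 2 μ) := rfl
    rw [h1]
    calc ‖(((W n).orthogonalProjectionOnto x : W n) : Lp ℂ 2 μ)‖
        = ‖(W n).orthogonalProjectionOnto x‖ := rfl
      _ ≤ ‖(W n).orthogonalProjectionOnto‖ * ‖x‖ := ((W n).orthogonalProjectionOnto).le_opNorm x
      _ ≤ 1 * ‖x‖ := mul_le_mul_of_nonneg_right (Submodule.orthogonalProjectionOnto_norm_le _) (norm_nonneg x)
      _ = ‖x‖ := one_mul _
  have hmem : ∀ m : ℕ, MemLp ((CE m).indicator (φ : E → ℂ)) 2 μ :=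
    fun m => (Lp.memLp φ).indicator (hCEm m)
  set φm : ℕ → Lp ℂ 2 μ := fun m => (hmem m).toLp _ with hφm_def
  set ν : Measure E := μ.withDensity (fun x => (‖(φ : E → ℂ) x‖₊ : ℝ≥0∞) ^ (2:ℝ)) with hν_def
  have hν_apply : ∀ A : Set E, MeasurableSet A →
      eLpNorm (A.indicator (φ : E → ℂ)) 2 μ = (ν A) ^ (1/2 : ℝ) := by
    intro A hA
    rw [eLpNorm_indicator_eq_eLpNorm_restrict hA,
      eLpNorm_eq_lintegral_rpow_enorm_toReal two_ne_zero ENNReal.ofNat_ne_top]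
    rw [hν_def, withDensity_apply _ hA]
    have h2 : ((2:ℝ≥0∞)).toReal = (2:ℝ) := by norm_num
    rw [h2]
    rfl
  have hν_fin : ν Set.univ ≠ ⊤ := by
    intro hcon
    have h1 : eLpNorm (φ : E → ℂ) 2 μ = (ν Set.univ) ^ (1/2:ℝ) := by
      have h2 := hν_apply Set.univ MeasurableSet.univ
      rwa [Set.indicator_univ] at h2
    rw [hcon, ENNReal.top_rpow_of_pos (by norm_num)] at h1
    exact (Lp.eLpNorm_ne_top φ) h1
  have htend : Tendsto (fun m => ν ((CE m)ᶜ)) atTop (𝓝 0) := by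
    have h1 := MeasureTheory.tendsto_measure_iInter_atTop (μ := ν)
      (fun m => ((hCEm m).compl).nullMeasurableSet)
      (fun m m' h => Set.compl_subset_compl.mpr (CE.subset h))
      ⟨0, ne_top_of_le_ne_top hν_fin (measure_mono (Set.subset_univ _))⟩
    have h2 : (⋂ m, ((CE m)ᶜ : Set E)) = ∅ := by
      rw [← Set.compl_iUnion, CE.iUnion_eq, Set.compl_univ]
    rw [h2] at h1
    simpa [Function.comp_def] using h1
  have hdiff : ∀ m, ‖φ - φm m‖ = ((ν ((CE m)ᶜ)) ^ (1/2:ℝ)).toReal := by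
    intro m
    rw [Lp.norm_def]
    congr 1
    rw [← hν_apply _ (hCEm m).compl]
    refine eLpNorm_congr_ae ?_
    filter_upwards [Lp.coeFn_sub φ (φm m), (hmem m).coeFn_toLp] with x h1 h2
    rw [h1, Set.indicator_compl, Pi.sub_apply, Pi.sub_apply, h2]
  have htend2 : Tendsto (fun m => ‖φ - φm m‖) atTop (𝓝 0) := by
    have h0 : Tendsto (fun m => (ν ((CE m)ᶜ)) ^ (1/2:ℝ)) atTop (𝓝 ((0:ℝ≥0∞) ^ (1/2:ℝ))) :=
      (ENNReal.continuous_rpow_const.tendsto 0).comp htend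
    rw [ENNReal.zero_rpow_of_pos (by norm_num)] at h0
    have h1 := (ENNReal.tendsto_toReal (by simp : (0:ℝ≥0∞) ≠ ⊤)).comp h0
    have h2 : (fun m => ‖φ - φm m‖) = fun m => ((ν ((CE m)ᶜ)) ^ (1/2:ℝ)).toReal :=
      funext hdiff
    rw [h2]
    simpa [Function.comp_def] using h1
  obtain ⟨m, hm⟩ : ∃ m, ‖φ - φm m‖ < ε/2 :=
    (Tendsto.eventually_lt_const (by linarith : (0:ℝ) < ε/2) htend2).exists
  have hφm_supp : (↑↑(φm m) : E → ℂ) =ᵐ[μ] (CE m).indicator ↑↑(φm m) := by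
    have h1 := (hmem m).coeFn_toLp
    refine h1.trans ?_
    filter_upwards [h1] with x hx
    by_cases hxm : x ∈ CE m
    · rw [Set.indicator_of_mem hxm, Set.indicator_of_mem hxm, hx, Set.indicator_of_mem hxm]
    · rw [Set.indicator_of_notMem hxm, Set.indicator_of_notMem hxm]
  set ε' := ε / (2 * (‖φm m‖ + 1)) with hε'_def
  have hε'pos : 0 < ε' := by positivity
  obtain ⟨N, hNkey⟩ := key ε' hε'pos (CE m) (hCEm m) (hCEc m)
  rw [eventually_atTop]
  refine ⟨N, fun n hn => ?_⟩
  have hsplit : projCLM (W n) φ = projCLM (W n) (φ - φm m) + projCLM (W n) (φm m) := by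
    rw [← map_add, sub_add_cancel]
  have hε'bound : ε' * ‖φm m‖ ≤ ε/2 := by
    rw [hε'_def, div_mul_eq_mul_div, div_le_div_iff₀ (by positivity) (by norm_num)]
    nlinarith [norm_nonneg (φm m)]
  calc ‖projCLM (W n) φ‖ ≤ ‖projCLM (W n) (φ - φm m)‖ + ‖projCLM (W n) (φm m)‖ := by
        rw [hsplit]; exact norm_add_le _ _
    _ ≤ ‖φ - φm m‖ + ε' * ‖φm m‖ := add_le_add (hcontr n _) (hNkey n hn (φm m) hφm_supp)
    _ < ε/2 + ε/2 := add_lt_add_of_lt_of_le hm hε'bound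
    _ = ε := by ring
end
end

section
/- Let E be a locally compact Polish space with Borel measure μ, f a bounded nonnegative continuous function on E, Π an orthogonal projection on L_2(E,μ) with √f Π √f trace class, and g : E → [0,1] measurable with 1 + (g−1)Π invertible. Let Π^g = √g Π (1+(g−1)Π)^{-1} √g. Then √f Π^g √f is trace class. -/
open ContinuousLinearMap Filter MeasureTheory
open scoped NNReal ENNReal Topology

noncomputable section

variable {H : Type*} [NormedAddCommGroup H] [InnerProductSpace ℂ H] [CompleteSpace H]
variable {ι : Type*}

section Aux

set_option linter.unusedSectionVars false

theorem hasSum_norm_sq (e : HilbertBasis ι ℂ H) (x : H) :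
    HasSum (fun j => ‖(inner ℂ (e j) x : ℂ)‖ ^ 2) (‖x‖ ^ 2) := by
  have h := (e.hasSum_inner_mul_inner x x).mapL (RCLike.reCLM (K := ℂ))
  simp only [RCLike.reCLM_apply] at h
  have h1 : ∀ j, RCLike.re ((inner ℂ x (e j) : ℂ) * (inner ℂ (e j) x : ℂ))
      = ‖(inner ℂ (e j) x : ℂ)‖ ^ 2 := by
    intro j
    rw [← inner_conj_symm x (e j), RCLike.conj_mul]
    simp [← Complex.ofReal_pow]
  have h2 : RCLike.re ((inner ℂ x x : ℂ)) = ‖x‖ ^ 2 := inner_self_eq_norm_sq x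
  simpa only [h1, h2] using h

theorem IsHS.compL (e : HilbertBasis ι ℂ H) {T : H →L[ℂ] H} (hT : IsHS e T) (B : H →L[ℂ] H) :
    IsHS e (B ∘L T) := by
  refine Summable.of_nonneg_of_le (fun i => by positivity) (fun i => ?_)
    (hT.mul_left (‖B‖ ^ 2))
  have h := B.le_opNorm (T (e i))
  calc ‖(B ∘L T) (e i)‖ ^ 2 ≤ (‖B‖ * ‖T (e i)‖) ^ 2 := by
        apply pow_le_pow_left₀ (norm_nonneg _) h
    _ = ‖B‖ ^ 2 * ‖T (e i)‖ ^ 2 := by ring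

theorem IsHS.adjoint' (e : HilbertBasis ι ℂ H) {T : H →L[ℂ] H} (hT : IsHS e T) :
    IsHS e (adjoint T) := by
  set a : ι × ι → ℝ := fun p => ‖(inner ℂ (e p.2) (T (e p.1)) : ℂ)‖ ^ 2 with ha
  have ha0 : ∀ p, 0 ≤ a p := fun p => by positivity
  have hsa : Summable a := by
    rw [summable_prod_of_nonneg ha0]
    refine ⟨fun i => (hasSum_norm_sq e (T (e i))).summable, ?_⟩
    have : ∀ i, (∑' j, a (i, j)) = ‖T (e i)‖ ^ 2 := fun i =>
      (hasSum_norm_sq e (T (e i))).tsum_eq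
    simpa only [IsHS, this] using hT
  have hswap : Summable (a ∘ Prod.swap) := ((Equiv.prodComm ι ι).summable_iff).2 hsa
  have key : ∀ p : ι × ι, (a ∘ Prod.swap) p = ‖(inner ℂ (e p.2) ((adjoint T) (e p.1)) : ℂ)‖ ^ 2 := by
    intro ⟨j, i⟩
    simp only [Function.comp, Prod.swap, ha]
    rw [adjoint_inner_right, ← inner_conj_symm (e j) (T (e i)), RCLike.norm_conj]
  rw [funext key] at hswap
  rw [summable_prod_of_nonneg (fun p => by positivity)] at hswap
  have hq : ∀ j, (∑' i, ‖(inner ℂ (e i) ((adjoint T) (e j)) : ℂ)‖ ^ 2) = ‖(adjoint T) (e j)‖ ^ 2 :=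
    fun j => (hasSum_norm_sq e ((adjoint T) (e j))).tsum_eq
  have h2 := hswap.2
  simpa only [IsHS, hq] using h2

theorem IsHS.compR (e : HilbertBasis ι ℂ H) {T : H →L[ℂ] H} (hT : IsHS e T) (B : H →L[ℂ] H) :
    IsHS e (T ∘L B) := by
  have h := ((hT.adjoint' e).compL e (adjoint B)).adjoint' e
  rwa [adjoint_comp, adjoint_adjoint, adjoint_adjoint] at h

theorem IsHS.sub' (e : HilbertBasis ι ℂ H) {S T : H →L[ℂ] H} (hS : IsHS e S) (hT : IsHS e T) :
    IsHS e (S - T) := by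
  refine Summable.of_nonneg_of_le (fun i => by positivity) (fun i => ?_)
    (((hS.add hT)).mul_left 2)
  have h : ‖(S - T) (e i)‖ ≤ ‖S (e i)‖ + ‖T (e i)‖ := by
    simpa using norm_sub_le (S (e i)) (T (e i))
  have h2 : ‖(S - T) (e i)‖ ^ 2 ≤ (‖S (e i)‖ + ‖T (e i)‖) ^ 2 :=
    pow_le_pow_left₀ (norm_nonneg _) h 2
  nlinarith [sq_nonneg (‖S (e i)‖ - ‖T (e i)‖)]

theorem mult_sa {E : Type*} [MeasurableSpace E] {μ : Measure E}
    (c : E → ℝ) (M : Lp ℂ 2 μ →L[ℂ] Lp ℂ 2 μ)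
    (hM : ∀ φ : Lp ℂ 2 μ, (M φ : E → ℂ) =ᵐ[μ] fun x => (c x : ℂ) * φ x) :
    adjoint M = M := by
  symm
  rw [eq_adjoint_iff]
  intro x y
  rw [L2.inner_def, L2.inner_def]
  apply integral_congr_ae
  filter_upwards [hM x, hM y] with a hx hy
  simp only [hx, hy, RCLike.inner_apply, map_mul, Complex.conj_ofReal]
  ring

theorem mult_comm' {E : Type*} [MeasurableSpace E] {μ : Measure E}
    (c d : E → ℝ) (M N : Lp ℂ 2 μ →L[ℂ] Lp ℂ 2 μ)
    (hM : ∀ φ : Lp ℂ 2 μ, (M φ : E → ℂ) =ᵐ[μ] fun x => (c x : ℂ) * φ x)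
    (hN : ∀ φ : Lp ℂ 2 μ, (N φ : E → ℂ) =ᵐ[μ] fun x => (d x : ℂ) * φ x) :
    M ∘L N = N ∘L M := by
  ext φ
  simp only [coe_comp', Function.comp_apply]
  filter_upwards [hM (N φ), hN φ, hN (M φ), hM φ] with a h1 h2 h3 h4
  rw [h1, h3, h2, h4]
  ring

end Aux

set_option maxHeartbeats 2000000 in
/-- if `sqrt f P sqrt f` is trace class and `1 + (g-1) P` is invertible,
then `sqrt f P^g sqrt f` is trace class, where `P^g = sqrt g P (1 + (g-1) P)⁻¹ sqrt g`.
Here `Mf` is multiplication by `sqrt f` and `Mg` by `sqrt g`. -/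
theorem stmt17 {E : Type*} [TopologicalSpace E] [PolishSpace E] [LocallyCompactSpace E]
    [MeasurableSpace E] [BorelSpace E] {μ : Measure E} [SigmaFinite μ]
    (e : HilbertBasis ι ℂ (Lp ℂ 2 μ))
    (f : E → ℝ) (hfc : Continuous f) (hf0 : ∀ x, 0 ≤ f x) (hfb : ∃ C : ℝ, ∀ x, f x ≤ C)
    (Mf : Lp ℂ 2 μ →L[ℂ] Lp ℂ 2 μ)
    (hMf : ∀ φ : Lp ℂ 2 μ, (Mf φ : E → ℂ) =ᵐ[μ] fun x => (Real.sqrt (f x) : ℂ) * φ x)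
    (P : Lp ℂ 2 μ →L[ℂ] Lp ℂ 2 μ) (hproj : P ∘L P = P) (hsa : IsSelfAdjoint P)
    (g : E → ℝ) (hgm : Measurable g) (hg0 : ∀ x, 0 ≤ g x) (hg1 : ∀ x, g x ≤ 1)
    (Mg : Lp ℂ 2 μ →L[ℂ] Lp ℂ 2 μ)
    (hMg : ∀ φ : Lp ℂ 2 μ, (Mg φ : E → ℂ) =ᵐ[μ] fun x => (Real.sqrt (g x) : ℂ) * φ x)
    (htc : IsTraceClass e (Mf ∘L P ∘L Mf))
    (hU : IsUnit (1 + (Mg ∘L Mg - 1) ∘L P))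
    (Pg : Lp ℂ 2 μ →L[ℂ] Lp ℂ 2 μ)
    (hPg : Pg = Mg ∘L P ∘L Ring.inverse (1 + (Mg ∘L Mg - 1) ∘L P) ∘L Mg) :
    IsTraceClass e (Mf ∘L Pg ∘L Mf) := by
  obtain ⟨A, B, hA, hB, hAB⟩ := htc
  have hMf_sa : adjoint Mf = Mf := mult_sa (fun x => Real.sqrt (f x)) Mf hMf
  have hMg_sa : adjoint Mg = Mg := mult_sa (fun x => Real.sqrt (g x)) Mg hMg
  have hP_sa : adjoint P = P := by rw [← star_eq_adjoint]; exact hsa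
  have hcomm : Mf ∘L Mg = Mg ∘L Mf := mult_comm' (fun x => Real.sqrt (f x)) (fun x => Real.sqrt (g x)) Mf Mg hMf hMg
  have hPpt : ∀ x, P (P x) = P x := by
    intro x
    have := DFunLike.congr_fun hproj x
    simpa using this
  have hcpt : ∀ x, Mf (Mg x) = Mg (Mf x) := by
    intro x
    have := DFunLike.congr_fun hcomm x
    simpa using this
  -- the operator T = P ∘ Mf satisfies T* T = A* B
  have hTadj : adjoint (P ∘L Mf) = Mf ∘L P := by rw [adjoint_comp, hMf_sa, hP_sa]
  have hTT : (adjoint (P ∘L Mf)) ∘L (P ∘L Mf) = adjoint A ∘L B := by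
    rw [hTadj, ← hAB]
    refine ContinuousLinearMap.ext fun x => ?_
    simp only [coe_comp', Function.comp_apply]
    congr 1
    exact hPpt (Mf x)
  -- Step 1: P ∘ Mf is Hilbert–Schmidt
  have h1 : IsHS e (P ∘L Mf) := by
    refine Summable.of_nonneg_of_le (fun i => by positivity) (fun i => ?_)
      ((hA.add hB).mul_left (1 / 2))
    have e0 : (inner ℂ ((P ∘L Mf) (e i)) ((P ∘L Mf) (e i)) : ℂ) = inner ℂ (A (e i)) (B (e i)) := by
      calc (inner ℂ ((P ∘L Mf) (e i)) ((P ∘L Mf) (e i)) : ℂ)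
          = inner ℂ (e i : Lp ℂ 2 μ) ((adjoint (P ∘L Mf)) ((P ∘L Mf) (e i))) :=
            (adjoint_inner_right (P ∘L Mf) (e i) ((P ∘L Mf) (e i))).symm
        _ = inner ℂ (e i : Lp ℂ 2 μ) ((adjoint A) (B (e i))) := by
            have := DFunLike.congr_fun hTT (e i)
            simp only [coe_comp', Function.comp_apply] at this
            simp only [coe_comp', Function.comp_apply]
            rw [this]
        _ = inner ℂ (A (e i)) (B (e i)) := adjoint_inner_right A (e i) (B (e i))
    have e1 : ‖(P ∘L Mf) (e i)‖ ^ 2 = RCLike.re (inner ℂ (A (e i)) (B (e i)) : ℂ) := by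
      rw [← inner_self_eq_norm_sq (𝕜 := ℂ), e0]
    have hre : RCLike.re (inner ℂ (A (e i)) (B (e i)) : ℂ)
        ≤ ‖(inner ℂ (A (e i)) (B (e i)) : ℂ)‖ := RCLike.re_le_norm _
    have hcs := norm_inner_le_norm (𝕜 := ℂ) (A (e i)) (B (e i))
    rw [e1]
    nlinarith [sq_nonneg (‖A (e i)‖ - ‖B (e i)‖)]
  -- Step 2: Mf ∘ P is Hilbert–Schmidt
  have h2 : IsHS e (Mf ∘L P) := by
    have := h1.adjoint' e
    rwa [hTadj] at this
  -- the first HS factor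
  have hA' : IsHS e ((P ∘L Mf) ∘L Mg) := h1.compR e Mg
  -- algebra with the inverse
  set R : Lp ℂ 2 μ →L[ℂ] Lp ℂ 2 μ := Ring.inverse (1 + (Mg ∘L Mg - 1) ∘L P) with hRdef
  have hRS : R * (1 + (Mg * Mg - 1) * P) = 1 := Ring.inverse_mul_cancel _ hU
  have hR : R = 1 - R * ((Mg * Mg - 1) * P) := by
    rw [mul_add, mul_one] at hRS
    exact eq_sub_of_add_eq hRS
  have hPMgMf : IsHS e (P * (Mg * Mf)) := by
    have heq : P * (Mg * Mf) = (P ∘L Mf) ∘L Mg := by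
      refine ContinuousLinearMap.ext fun x => ?_
      simp only [mul_def, coe_comp', Function.comp_apply]
      congr 1
      exact (hcpt x).symm
    rw [heq]
    exact hA'
  have hexp : P * R * (Mg * Mf)
      = P * (Mg * Mf) - (P * (R * (Mg * Mg - 1))) * (P * (Mg * Mf)) := by
    nth_rewrite 1 [hR]
    noncomm_ring
  have hB' : IsHS e (P * R * (Mg * Mf)) := by
    rw [hexp]
    exact IsHS.sub' e hPMgMf (hPMgMf.compL e (P * (R * (Mg * Mg - 1))))
  refine ⟨(P ∘L Mf) ∘L Mg, P * R * (Mg * Mf), hA', hB', ?_⟩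
  have hadjA' : adjoint ((P ∘L Mf) ∘L Mg) = Mg ∘L (Mf ∘L P) := by
    rw [adjoint_comp, hTadj, hMg_sa]
  rw [hadjA', hPg]
  refine ContinuousLinearMap.ext fun x => ?_
  simp only [coe_comp', Function.comp_apply, mul_def]
  rw [hPpt (R (Mg (Mf x)))]
  exact hcpt (P (R (Mg (Mf x))))
end
end

section
/- Let (Π_α) be a family of orthogonal projections on L_2(E, μ) and g : E → [0,1] measurable such that each 1 + (g−1)Π_α is invertible and sup_α ‖(1+(g−1)Π_α)^{-1}‖ = C < ∞. Let f ≥ 0 be bounded measurable with sup_α tr √f Π_α √f < ∞. Then sup_α tr √f Π_α^g √f < ∞, where Π_α^g = √g Π_α (1+(g−1)Π_α)^{-1} √g; moreover, if B ⊆ E is Borel with sup_α tr χ_{E∖B} √f Π_α √f χ_{E∖B} < ε, then sup_α tr χ_{E∖B} √f Π_α^g √f χ_{E∖B} ≤ C ε. -/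
open ContinuousLinearMap Filter MeasureTheory
open scoped NNReal ENNReal Topology

noncomputable section

variable {H : Type*} [NormedAddCommGroup H] [InnerProductSpace ℂ H] [CompleteSpace H]
variable {ι : Type*}

set_option linter.unusedSectionVars false
set_option linter.dupNamespace false
set_option maxHeartbeats 1000000

namespace Stmt18Aux

variable (e : HilbertBasis ι ℂ H)

/-- ENNReal-valued Hilbert–Schmidt square sum. -/
noncomputable def sqS (T : H →L[ℂ] H) : ℝ≥0∞ := ∑' i, (‖T (e i)‖₊ : ℝ≥0∞) ^ 2

lemma parseval_enn (x : H) :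
    ∑' j, (‖(inner ℂ (e j : H) x : ℂ)‖₊ : ℝ≥0∞) ^ 2 = (‖x‖₊ : ℝ≥0∞) ^ 2 := by
  have h := e.hasSum_inner_mul_inner x x
  have h2 : (fun j => (inner ℂ x (e j : H) : ℂ) * inner ℂ (e j : H) x)
      = fun j => (((‖(inner ℂ (e j : H) x : ℂ)‖₊ ^ 2 : ℝ≥0) : ℝ) : ℂ) := by
    funext j
    rw [← inner_conj_symm x (e j : H), RCLike.conj_mul]
    push_cast
    norm_num
  rw [h2, inner_self_eq_norm_sq_to_K] at h
  have h3 : HasSum (fun j => ((‖(inner ℂ (e j : H) x : ℂ)‖₊ ^ 2 : ℝ≥0) : ℝ))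
      ((‖x‖₊ ^ 2 : ℝ≥0) : ℝ) := by
    rw [← Complex.hasSum_ofReal]
    have hx : (((‖x‖₊ ^ 2 : ℝ≥0) : ℝ) : ℂ) = (‖x‖ : ℂ) ^ 2 := by push_cast; norm_num
    rw [hx]; exact h
  have h4 := ENNReal.tsum_coe_eq (NNReal.hasSum_coe.mp h3)
  simpa [ENNReal.coe_pow] using h4

lemma sqS_adjoint (T : H →L[ℂ] H) : sqS e (adjoint T) = sqS e T := by
  calc sqS e (adjoint T)
      = ∑' i, ∑' j, (‖(inner ℂ (e j : H) (adjoint T (e i)) : ℂ)‖₊ : ℝ≥0∞) ^ 2 := by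
        simp only [sqS]; exact tsum_congr fun i => (parseval_enn e _).symm
    _ = ∑' i, ∑' j, (‖(inner ℂ (e i : H) (T (e j)) : ℂ)‖₊ : ℝ≥0∞) ^ 2 := by
        refine tsum_congr fun i => tsum_congr fun j => ?_
        have hh : (inner ℂ (e j : H) (adjoint T (e i)) : ℂ)
            = (starRingEnd ℂ) (inner ℂ (e i : H) (T (e j))) := by
          rw [adjoint_inner_right]
          exact (inner_conj_symm (T (e j)) (e i : H)).symm
        rw [hh]
        rw [show ((starRingEnd ℂ) (inner ℂ (e i : H) (T (e j)) : ℂ)) = star (inner ℂ (e i : H) (T (e j)) : ℂ) from rfl, nnnorm_star]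
    _ = ∑' j, ∑' i, (‖(inner ℂ (e i : H) (T (e j)) : ℂ)‖₊ : ℝ≥0∞) ^ 2 := ENNReal.tsum_comm
    _ = sqS e T := by
        simp only [sqS]; exact tsum_congr fun j => parseval_enn e _

lemma sqS_comp_le (S T : H →L[ℂ] H) : sqS e (S ∘L T) ≤ (‖S‖₊ : ℝ≥0∞) ^ 2 * sqS e T := by
  rw [sqS, sqS, ← ENNReal.tsum_mul_left]
  refine ENNReal.tsum_le_tsum fun i => ?_
  rw [← mul_pow]
  refine pow_le_pow_left₀ (zero_le) ?_ 2
  rw [ContinuousLinearMap.comp_apply]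
  exact_mod_cast S.le_opNNNorm (T (e i))

lemma nnnorm_adjoint (T : H →L[ℂ] H) : ‖adjoint T‖₊ = ‖T‖₊ := by
  rw [← star_eq_adjoint]
  exact nnnorm_star T

lemma sqS_comp_right_le (T S : H →L[ℂ] H) : sqS e (T ∘L S) ≤ (‖S‖₊ : ℝ≥0∞) ^ 2 * sqS e T := by
  rw [← sqS_adjoint e (T ∘L S), adjoint_comp]
  calc sqS e (adjoint S ∘L adjoint T)
      ≤ (‖adjoint S‖₊ : ℝ≥0∞) ^ 2 * sqS e (adjoint T) := sqS_comp_le e _ _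
    _ = (‖S‖₊ : ℝ≥0∞) ^ 2 * sqS e T := by rw [sqS_adjoint, nnnorm_adjoint]

lemma isHS_iff_sqS (T : H →L[ℂ] H) : IsHS e T ↔ sqS e T ≠ ⊤ := by
  have h : (fun i => ‖T (e i)‖ ^ 2) = fun i => ((‖T (e i)‖₊ ^ 2 : ℝ≥0) : ℝ) := by
    funext i; push_cast; ring
  rw [IsHS, h, NNReal.summable_coe, ← ENNReal.tsum_coe_ne_top_iff_summable, sqS]
  simp [ENNReal.coe_pow]

lemma tsum_sq_eq (T : H →L[ℂ] H) : ∑' i, ‖T (e i)‖ ^ 2 = (sqS e T).toReal := by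
  rw [sqS, ENNReal.tsum_toReal_eq (fun i => ENNReal.pow_ne_top ENNReal.coe_ne_top)]
  refine tsum_congr fun i => ?_
  simp [ENNReal.toReal_pow]

lemma inner_adjoint_self (A : H →L[ℂ] H) (x : H) :
    (inner ℂ x ((adjoint A ∘L A) x) : ℂ) = ((‖A x‖ ^ 2 : ℝ) : ℂ) := by
  rw [ContinuousLinearMap.comp_apply, adjoint_inner_right, inner_self_eq_norm_sq_to_K]
  norm_cast

lemma opTrace_self_re (A : H →L[ℂ] H) :
    (opTrace e (adjoint A ∘L A)).re = ∑' i, ‖A (e i)‖ ^ 2 := by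
  simp only [opTrace]
  have h : (fun i => (inner ℂ (e i : H) ((adjoint A ∘L A) (e i)) : ℂ))
      = fun i => ((‖A (e i)‖ ^ 2 : ℝ) : ℂ) := funext fun i => inner_adjoint_self A _
  rw [h, ← Complex.ofReal_tsum, Complex.ofReal_re]

lemma opTrace_quad_le (A S : H →L[ℂ] H) (hA : IsHS e A) :
    (opTrace e (adjoint A ∘L (S ∘L A))).re ≤ ‖S‖ * ∑' i, ‖A (e i)‖ ^ 2 := by
  have hterm : (fun i => (inner ℂ (e i : H) ((adjoint A ∘L (S ∘L A)) (e i)) : ℂ))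
      = fun i => (inner ℂ (A (e i)) (S (A (e i))) : ℂ) := by
    funext i
    rw [ContinuousLinearMap.comp_apply, ContinuousLinearMap.comp_apply, adjoint_inner_right]
  have hb : ∀ i, ‖(inner ℂ (A (e i)) (S (A (e i))) : ℂ)‖ ≤ ‖S‖ * ‖A (e i)‖ ^ 2 := by
    intro i
    calc ‖(inner ℂ (A (e i)) (S (A (e i))) : ℂ)‖
        ≤ ‖A (e i)‖ * ‖S (A (e i))‖ := norm_inner_le_norm _ _
      _ ≤ ‖A (e i)‖ * (‖S‖ * ‖A (e i)‖) := by
          exact mul_le_mul_of_nonneg_left (S.le_opNorm _) (norm_nonneg _)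
      _ = ‖S‖ * ‖A (e i)‖ ^ 2 := by ring
  have hg : Summable fun i => ‖S‖ * ‖A (e i)‖ ^ 2 := hA.mul_left _
  have hsum : Summable fun i => (inner ℂ (A (e i)) (S (A (e i))) : ℂ) :=
    Summable.of_norm_bounded hg hb
  simp only [opTrace, hterm]
  rw [Complex.re_tsum hsum]
  have hre : Summable fun i => (inner ℂ (A (e i)) (S (A (e i))) : ℂ).re := by
    have := hsum.map (AddMonoidHom.mk' Complex.re (fun a b => Complex.add_re a b))
      Complex.continuous_re
    exact this
  calc ∑' i, (inner ℂ (A (e i)) (S (A (e i))) : ℂ).re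
      ≤ ∑' i, ‖S‖ * ‖A (e i)‖ ^ 2 := by
        refine Summable.tsum_le_tsum (fun i => ?_) hre hg
        calc (inner ℂ (A (e i)) (S (A (e i))) : ℂ).re
            ≤ ‖(inner ℂ (A (e i)) (S (A (e i))) : ℂ)‖ := by
              exact Complex.re_le_norm _
          _ ≤ ‖S‖ * ‖A (e i)‖ ^ 2 := hb i
    _ = ‖S‖ * ∑' i, ‖A (e i)‖ ^ 2 := tsum_mul_left

/-- central noncommutative ring identity -/
lemma central_identity {M : Type*} [Ring M] (mf mg p r : M)
    (hp : p * p = p) (hru : r * (1 + (mg * mg - 1) * p) = 1)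
    (hfg : mf * mg = mg * mf) :
    mf * (mg * p * r * mg) * mf = (mg * (mf * p)) * (r * ((p * mf) * mg)) := by
  have h0 : p * (1 - p) = 0 := by rw [mul_sub, mul_one, hp, sub_self]
  have h1 : (1 + (mg * mg - 1) * p) * (1 - p) = 1 - p := by
    rw [add_mul, one_mul, mul_assoc, h0, mul_zero, add_zero]
  have h2 : r * (1 - p) = 1 - p := by
    calc r * (1 - p) = r * ((1 + (mg * mg - 1) * p) * (1 - p)) := by rw [h1]
      _ = 1 - p := by rw [← mul_assoc, hru, one_mul]
  have h3 : p * r = p * r * p := by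
    have h4 : p * r * (1 - p) = 0 := by rw [mul_assoc, h2, h0]
    rw [mul_sub, mul_one] at h4
    exact (sub_eq_zero.mp h4)
  have hprX : ∀ X : M, p * (r * (p * X)) = p * (r * X) := fun X => by
    rw [← mul_assoc, ← mul_assoc, ← h3, mul_assoc]
  calc mf * (mg * p * r * mg) * mf
      = mf * (mg * (p * (r * (mg * mf)))) := by simp only [mul_assoc]
    _ = mg * (mf * (p * (r * (mg * mf)))) := by
        rw [← mul_assoc, hfg, mul_assoc]
    _ = mg * (mf * (p * (r * (mf * mg)))) := by rw [hfg]
    _ = mg * (mf * (p * (r * (p * (mf * mg))))) := by rw [hprX]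
    _ = (mg * (mf * p)) * (r * ((p * mf) * mg)) := by simp only [mul_assoc]

lemma proj_identity {M : Type*} [Ring M] (mf p : M) (hp : p * p = p) :
    mf * p * mf = (mf * p) * (p * mf) := by
  rw [mul_assoc mf p (p * mf), ← mul_assoc p p mf, hp, ← mul_assoc]



variable {E : Type*} [MeasurableSpace E] {μ : Measure E}

def IsMulOp (μ : Measure E) (M : Lp ℂ 2 μ →L[ℂ] Lp ℂ 2 μ) (σ : E → ℂ) : Prop :=
  ∀ φ : Lp ℂ 2 μ, (M φ : E → ℂ) =ᵐ[μ] fun x => σ x * φ x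

lemma IsMulOp.comp_ae {M₁ M₂ : Lp ℂ 2 μ →L[ℂ] Lp ℂ 2 μ} {σ₁ σ₂ : E → ℂ}
    (h₁ : IsMulOp μ M₁ σ₁) (h₂ : IsMulOp μ M₂ σ₂) (φ : Lp ℂ 2 μ) :
    ((M₁ ∘L M₂) φ : E → ℂ) =ᵐ[μ] fun x => σ₁ x * (σ₂ x * φ x) := by
  rw [ContinuousLinearMap.comp_apply]
  refine (h₁ (M₂ φ)).trans ?_
  filter_upwards [h₂ φ] with x hx
  simp only [hx]

lemma IsMulOp.comm {M₁ M₂ : Lp ℂ 2 μ →L[ℂ] Lp ℂ 2 μ} {σ₁ σ₂ : E → ℂ}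
    (h₁ : IsMulOp μ M₁ σ₁) (h₂ : IsMulOp μ M₂ σ₂) : M₁ ∘L M₂ = M₂ ∘L M₁ := by
  refine ContinuousLinearMap.ext fun φ => ?_
  refine Lp.ext ((h₁.comp_ae h₂ φ).trans (.trans ?_ (h₂.comp_ae h₁ φ).symm))
  refine Eventually.of_forall fun x => ?_
  ring_nf

lemma IsMulOp.selfAdjoint {M : Lp ℂ 2 μ →L[ℂ] Lp ℂ 2 μ} {σ : E → ℂ}
    (h : IsMulOp μ M σ) (hr : ∀ x, (starRingEnd ℂ) (σ x) = σ x) :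
    IsSelfAdjoint M := by
  rw [ContinuousLinearMap.isSelfAdjoint_iff_isSymmetric]
  intro φ ψ
  simp only [ContinuousLinearMap.coe_coe]
  rw [MeasureTheory.L2.inner_def, MeasureTheory.L2.inner_def]
  refine integral_congr_ae ?_
  filter_upwards [h φ, h ψ] with x h1 h2
  simp only [RCLike.inner_apply, h1, h2, map_mul, hr]
  ring

lemma IsMulOp.norm_le_one {M : Lp ℂ 2 μ →L[ℂ] Lp ℂ 2 μ} {σ : E → ℂ}
    (h : IsMulOp μ M σ) (hσ : ∀ x, ‖σ x‖ ≤ 1) : ‖M‖ ≤ 1 := by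
  refine ContinuousLinearMap.opNorm_le_bound _ zero_le_one fun φ => ?_
  rw [one_mul, Lp.norm_def, Lp.norm_def]
  refine ENNReal.toReal_mono (Lp.eLpNorm_ne_top φ) ?_
  calc eLpNorm (⇑(M φ)) 2 μ = eLpNorm (fun x => σ x * φ x) 2 μ := eLpNorm_congr_ae (h φ)
    _ ≤ eLpNorm (⇑φ) 2 μ := by
        refine eLpNorm_mono_ae (Eventually.of_forall fun x => ?_)
        rw [norm_mul]
        calc ‖σ x‖ * ‖φ x‖ ≤ 1 * ‖φ x‖ :=
              mul_le_mul_of_nonneg_right (hσ x) (norm_nonneg _)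
          _ = ‖φ x‖ := one_mul _


end Stmt18Aux


/-- uniform trace bounds for the induced operators
`P_a^g = sqrt g P_a (1 + (g-1) P_a)⁻¹ sqrt g` when the inverses are uniformly bounded by
`C`: uniform boundedness of the traces of `sqrt f P_a sqrt f` gives uniform boundedness of
the traces of `sqrt f P_a^g sqrt f`, and an `ε`-bound outside `B` persists up to `C ε`. -/
theorem stmt18 {α : Type*} {E : Type*} [MeasurableSpace E] {μ : Measure E} [SigmaFinite μ]
    (e : HilbertBasis ι ℂ (Lp ℂ 2 μ))
    (chi : Set E → (Lp ℂ 2 μ →L[ℂ] Lp ℂ 2 μ))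
    (hchi : ∀ (D : Set E) (φ : Lp ℂ 2 μ),
      (chi D φ : E → ℂ) =ᵐ[μ] fun x => D.indicator (fun _ => (1 : ℂ)) x * φ x)
    (P : α → Lp ℂ 2 μ →L[ℂ] Lp ℂ 2 μ)
    (hprojn : ∀ a, P a ∘L P a = P a) (hsan : ∀ a, IsSelfAdjoint (P a))
    (g : E → ℝ) (hgm : Measurable g) (hg0 : ∀ x, 0 ≤ g x) (hg1 : ∀ x, g x ≤ 1)
    (Mg : Lp ℂ 2 μ →L[ℂ] Lp ℂ 2 μ)
    (hMg : ∀ φ : Lp ℂ 2 μ, (Mg φ : E → ℂ) =ᵐ[μ] fun x => (Real.sqrt (g x) : ℂ) * φ x)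
    (hU : ∀ a, IsUnit (1 + (Mg ∘L Mg - 1) ∘L P a))
    (C : ℝ) (hC : ∀ a, ‖Ring.inverse (1 + (Mg ∘L Mg - 1) ∘L P a)‖ ≤ C)
    (f : E → ℝ) (hfm : Measurable f) (hf0 : ∀ x, 0 ≤ f x) (hfb : ∃ D : ℝ, ∀ x, f x ≤ D)
    (Mf : Lp ℂ 2 μ →L[ℂ] Lp ℂ 2 μ)
    (hMf : ∀ φ : Lp ℂ 2 μ, (Mf φ : E → ℂ) =ᵐ[μ] fun x => (Real.sqrt (f x) : ℂ) * φ x)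
    (htc : ∀ a, IsTraceClass e (Mf ∘L P a ∘L Mf))
    (hbound : ∃ M0 : ℝ, ∀ a, (opTrace e (Mf ∘L P a ∘L Mf)).re ≤ M0)
    (Pg : α → Lp ℂ 2 μ →L[ℂ] Lp ℂ 2 μ)
    (hPg : ∀ a, Pg a = Mg ∘L P a ∘L Ring.inverse (1 + (Mg ∘L Mg - 1) ∘L P a) ∘L Mg) :
    (∀ a, IsTraceClass e (Mf ∘L Pg a ∘L Mf)) ∧
      (∃ M1 : ℝ, ∀ a, (opTrace e (Mf ∘L Pg a ∘L Mf)).re ≤ M1) ∧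
      ∀ (B : Set E) (ε : ℝ), MeasurableSet B → 0 < ε →
        (∀ a, (opTrace e (chi Bᶜ ∘L (Mf ∘L P a ∘L Mf) ∘L chi Bᶜ)).re < ε) →
        ∀ a, (opTrace e (chi Bᶜ ∘L (Mf ∘L Pg a ∘L Mf) ∘L chi Bᶜ)).re ≤ C * ε := by
  classical
  have hMfmul : Stmt18Aux.IsMulOp μ Mf (fun x => (Real.sqrt (f x) : ℂ)) := hMf
  have hMgmul : Stmt18Aux.IsMulOp μ Mg (fun x => (Real.sqrt (g x) : ℂ)) := hMg
  have hXmul : ∀ D : Set E,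
      Stmt18Aux.IsMulOp μ (chi D) (fun x => D.indicator (fun _ => (1 : ℂ)) x) := hchi
  have hMfsa : IsSelfAdjoint Mf := hMfmul.selfAdjoint fun x => Complex.conj_ofReal _
  have hMgsa : IsSelfAdjoint Mg := hMgmul.selfAdjoint fun x => Complex.conj_ofReal _
  have hXsa : ∀ D, IsSelfAdjoint (chi D) := fun D => (hXmul D).selfAdjoint fun x => by
    by_cases hx : x ∈ D <;> simp [Set.indicator, hx]
  have hfg : Mf ∘L Mg = Mg ∘L Mf := hMfmul.comm hMgmul
  have hfg' : Mf * Mg = Mg * Mf := hfg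
  have hgX : ∀ D, Mg ∘L chi D = chi D ∘L Mg := fun D => hMgmul.comm (hXmul D)
  have hMgn : ‖Mg‖ ≤ 1 := by
    refine hMgmul.norm_le_one fun x => ?_
    have h : ‖((Real.sqrt (g x) : ℝ) : ℂ)‖ = Real.sqrt (g x) := by
      rw [Complex.norm_real, Real.norm_eq_abs, abs_of_nonneg (Real.sqrt_nonneg _)]
    rw [h]
    exact Real.sqrt_le_one.2 (hg1 x)
  have hMgnn : (‖Mg‖₊ : ℝ≥0∞) ≤ 1 := by exact_mod_cast hMgn
  have hMg2 : (‖Mg‖₊ : ℝ≥0∞) ^ 2 ≤ 1 := by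
    calc (‖Mg‖₊ : ℝ≥0∞) ^ 2 ≤ 1 ^ 2 := pow_le_pow_left₀ (zero_le) hMgnn 2
      _ = 1 := one_pow 2
  have hadjPf : ∀ a, adjoint (P a ∘L Mf) = Mf ∘L P a := fun a => by
    rw [adjoint_comp, hMfsa.adjoint_eq, (hsan a).adjoint_eq]
  have hMPM : ∀ a, Mf ∘L P a ∘L Mf = adjoint (P a ∘L Mf) ∘L (P a ∘L Mf) := fun a => by
    rw [hadjPf a]
    exact Stmt18Aux.proj_identity Mf (P a) (hprojn a)
  have hPfHS : ∀ a, IsHS e (P a ∘L Mf) := by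
    intro a
    obtain ⟨A₀, B₀, hA₀, hB₀, hfact⟩ := htc a
    have hterm : ∀ i, ‖(P a ∘L Mf) (e i)‖ ^ 2 = (inner ℂ (A₀ (e i)) (B₀ (e i)) : ℂ).re := by
      intro i
      have h1 : (inner ℂ (e i : Lp ℂ 2 μ) ((Mf ∘L P a ∘L Mf) (e i)) : ℂ)
          = ((‖(P a ∘L Mf) (e i)‖ ^ 2 : ℝ) : ℂ) := by
        rw [hMPM a]
        exact Stmt18Aux.inner_adjoint_self _ _
      have h2 : (inner ℂ (e i : Lp ℂ 2 μ) ((Mf ∘L P a ∘L Mf) (e i)) : ℂ)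
          = inner ℂ (A₀ (e i)) (B₀ (e i)) := by
        rw [hfact, ContinuousLinearMap.comp_apply, adjoint_inner_right]
      have h3 := h1.symm.trans h2
      calc ‖(P a ∘L Mf) (e i)‖ ^ 2 = ((‖(P a ∘L Mf) (e i)‖ ^ 2 : ℝ) : ℂ).re := (Complex.ofReal_re _).symm
        _ = _ := by rw [h3]
    show Summable fun i => ‖(P a ∘L Mf) (e i)‖ ^ 2
    have hg2 : Summable fun i => (‖A₀ (e i)‖ ^ 2 + ‖B₀ (e i)‖ ^ 2) / 2 :=
      (hA₀.add hB₀).div_const 2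
    refine Summable.of_nonneg_of_le (fun i => sq_nonneg _) (fun i => ?_) hg2
    rw [hterm i]
    calc (inner ℂ (A₀ (e i)) (B₀ (e i)) : ℂ).re
        ≤ ‖(inner ℂ (A₀ (e i)) (B₀ (e i)) : ℂ)‖ := by
          exact Complex.re_le_norm _
      _ ≤ ‖A₀ (e i)‖ * ‖B₀ (e i)‖ := norm_inner_le_norm _ _
      _ ≤ (‖A₀ (e i)‖ ^ 2 + ‖B₀ (e i)‖ ^ 2) / 2 := by
          nlinarith [sq_nonneg (‖A₀ (e i)‖ - ‖B₀ (e i)‖)]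
  have htr : ∀ a, (opTrace e (Mf ∘L P a ∘L Mf)).re = ∑' i, ‖(P a ∘L Mf) (e i)‖ ^ 2 := fun a => by
    rw [hMPM a]
    exact Stmt18Aux.opTrace_self_re e _
  have hadjA : ∀ a, adjoint ((P a ∘L Mf) ∘L Mg) = Mg ∘L (Mf ∘L P a) := fun a => by
    rw [adjoint_comp, hadjPf a, hMgsa.adjoint_eq]
  have hcore : ∀ a, Mf ∘L Pg a ∘L Mf
      = adjoint ((P a ∘L Mf) ∘L Mg)
        ∘L (Ring.inverse (1 + (Mg ∘L Mg - 1) ∘L P a) ∘L ((P a ∘L Mf) ∘L Mg)) := by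
    intro a
    rw [hPg a, hadjA a]
    exact Stmt18Aux.central_identity Mf Mg (P a)
      (Ring.inverse (1 + (Mg ∘L Mg - 1) ∘L P a)) (hprojn a)
      (Ring.inverse_mul_cancel _ (hU a)) hfg'
  have hsqPf_fin : ∀ a, Stmt18Aux.sqS e (P a ∘L Mf) ≠ ⊤ := fun a =>
    (Stmt18Aux.isHS_iff_sqS e _).mp (hPfHS a)
  have hsqA_le : ∀ a,
      Stmt18Aux.sqS e ((P a ∘L Mf) ∘L Mg) ≤ Stmt18Aux.sqS e (P a ∘L Mf) := by
    intro a
    calc Stmt18Aux.sqS e ((P a ∘L Mf) ∘L Mg)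
        ≤ (‖Mg‖₊ : ℝ≥0∞) ^ 2 * Stmt18Aux.sqS e (P a ∘L Mf) := Stmt18Aux.sqS_comp_right_le e _ _
      _ ≤ 1 * Stmt18Aux.sqS e (P a ∘L Mf) := mul_le_mul' hMg2 le_rfl
      _ = Stmt18Aux.sqS e (P a ∘L Mf) := one_mul _
  have hAHS : ∀ a, IsHS e ((P a ∘L Mf) ∘L Mg) := fun a =>
    (Stmt18Aux.isHS_iff_sqS e _).mpr (ne_top_of_le_ne_top (hsqPf_fin a) (hsqA_le a))
  have hCnn : α → 0 ≤ C := fun a => le_trans (norm_nonneg _) (hC a)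
  obtain ⟨M0, hM0⟩ := hbound
  refine ⟨?_, ?_, ?_⟩
  · intro a
    refine ⟨(P a ∘L Mf) ∘L Mg,
      Ring.inverse (1 + (Mg ∘L Mg - 1) ∘L P a) ∘L ((P a ∘L Mf) ∘L Mg),
      hAHS a, ?_, hcore a⟩
    refine (Stmt18Aux.isHS_iff_sqS e _).mpr (ne_top_of_le_ne_top ?_ (Stmt18Aux.sqS_comp_le e _ _))
    exact ENNReal.mul_ne_top (ENNReal.pow_ne_top ENNReal.coe_ne_top)
      (ne_top_of_le_ne_top (hsqPf_fin a) (hsqA_le a))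
  · refine ⟨C * M0, fun a => ?_⟩
    have h1 : (opTrace e (Mf ∘L Pg a ∘L Mf)).re
        ≤ ‖Ring.inverse (1 + (Mg ∘L Mg - 1) ∘L P a)‖
          * ∑' i, ‖((P a ∘L Mf) ∘L Mg) (e i)‖ ^ 2 := by
      rw [hcore a]
      exact Stmt18Aux.opTrace_quad_le e _ _ (hAHS a)
    have h2 : ∑' i, ‖((P a ∘L Mf) ∘L Mg) (e i)‖ ^ 2 ≤ ∑' i, ‖(P a ∘L Mf) (e i)‖ ^ 2 := by
      rw [Stmt18Aux.tsum_sq_eq, Stmt18Aux.tsum_sq_eq]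
      exact ENNReal.toReal_mono (hsqPf_fin a) (hsqA_le a)
    have h3 : ∑' i, ‖(P a ∘L Mf) (e i)‖ ^ 2 ≤ M0 := by
      rw [← htr a]; exact hM0 a
    have h4 : (0 : ℝ) ≤ ∑' i, ‖((P a ∘L Mf) ∘L Mg) (e i)‖ ^ 2 :=
      tsum_nonneg fun i => sq_nonneg _
    calc (opTrace e (Mf ∘L Pg a ∘L Mf)).re
        ≤ ‖Ring.inverse (1 + (Mg ∘L Mg - 1) ∘L P a)‖
          * ∑' i, ‖((P a ∘L Mf) ∘L Mg) (e i)‖ ^ 2 := h1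
      _ ≤ C * ∑' i, ‖((P a ∘L Mf) ∘L Mg) (e i)‖ ^ 2 :=
          mul_le_mul_of_nonneg_right (hC a) h4
      _ ≤ C * M0 := mul_le_mul_of_nonneg_left (h2.trans h3) (hCnn a)
  · intro B ε hB hε hsmall a
    have hswap : ((P a ∘L Mf) ∘L Mg) ∘L chi Bᶜ = ((P a ∘L Mf) ∘L chi Bᶜ) ∘L Mg := by
      rw [ContinuousLinearMap.comp_assoc, ContinuousLinearMap.comp_assoc, hgX Bᶜ]
      simp only [ContinuousLinearMap.comp_assoc]
    have hPfX_fin : Stmt18Aux.sqS e ((P a ∘L Mf) ∘L chi Bᶜ) ≠ ⊤ :=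
      ne_top_of_le_ne_top
        (ENNReal.mul_ne_top (ENNReal.pow_ne_top ENNReal.coe_ne_top) (hsqPf_fin a))
        (Stmt18Aux.sqS_comp_right_le e _ _)
    have hsqAX : Stmt18Aux.sqS e (((P a ∘L Mf) ∘L Mg) ∘L chi Bᶜ)
        ≤ Stmt18Aux.sqS e ((P a ∘L Mf) ∘L chi Bᶜ) := by
      rw [hswap]
      calc Stmt18Aux.sqS e (((P a ∘L Mf) ∘L chi Bᶜ) ∘L Mg)
          ≤ (‖Mg‖₊ : ℝ≥0∞) ^ 2 * Stmt18Aux.sqS e ((P a ∘L Mf) ∘L chi Bᶜ) :=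
            Stmt18Aux.sqS_comp_right_le e _ _
        _ ≤ 1 * Stmt18Aux.sqS e ((P a ∘L Mf) ∘L chi Bᶜ) := mul_le_mul' hMg2 le_rfl
        _ = Stmt18Aux.sqS e ((P a ∘L Mf) ∘L chi Bᶜ) := one_mul _
    have hAXHS : IsHS e (((P a ∘L Mf) ∘L Mg) ∘L chi Bᶜ) :=
      (Stmt18Aux.isHS_iff_sqS e _).mpr (ne_top_of_le_ne_top hPfX_fin hsqAX)
    have hMPMX : chi Bᶜ ∘L (Mf ∘L P a ∘L Mf) ∘L chi Bᶜ
        = adjoint ((P a ∘L Mf) ∘L chi Bᶜ) ∘L ((P a ∘L Mf) ∘L chi Bᶜ) := by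
      rw [hMPM a, hadjPf a, adjoint_comp, (hXsa Bᶜ).adjoint_eq, hadjPf a]
      simp only [ContinuousLinearMap.comp_assoc]
    have htrX : (opTrace e (chi Bᶜ ∘L (Mf ∘L P a ∘L Mf) ∘L chi Bᶜ)).re
        = ∑' i, ‖((P a ∘L Mf) ∘L chi Bᶜ) (e i)‖ ^ 2 := by
      rw [hMPMX]
      exact Stmt18Aux.opTrace_self_re e _
    have hcoreX : chi Bᶜ ∘L (Mf ∘L Pg a ∘L Mf) ∘L chi Bᶜ
        = adjoint (((P a ∘L Mf) ∘L Mg) ∘L chi Bᶜ)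
          ∘L (Ring.inverse (1 + (Mg ∘L Mg - 1) ∘L P a)
            ∘L (((P a ∘L Mf) ∘L Mg) ∘L chi Bᶜ)) := by
      rw [hcore a, hadjA a, adjoint_comp, (hXsa Bᶜ).adjoint_eq, hadjA a]
      simp only [ContinuousLinearMap.comp_assoc]
    have h1 : (opTrace e (chi Bᶜ ∘L (Mf ∘L Pg a ∘L Mf) ∘L chi Bᶜ)).re
        ≤ ‖Ring.inverse (1 + (Mg ∘L Mg - 1) ∘L P a)‖
          * ∑' i, ‖(((P a ∘L Mf) ∘L Mg) ∘L chi Bᶜ) (e i)‖ ^ 2 := by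
      rw [hcoreX]
      exact Stmt18Aux.opTrace_quad_le e _ _ hAXHS
    have h2 : ∑' i, ‖(((P a ∘L Mf) ∘L Mg) ∘L chi Bᶜ) (e i)‖ ^ 2
        ≤ ∑' i, ‖((P a ∘L Mf) ∘L chi Bᶜ) (e i)‖ ^ 2 := by
      rw [Stmt18Aux.tsum_sq_eq, Stmt18Aux.tsum_sq_eq]
      exact ENNReal.toReal_mono hPfX_fin hsqAX
    have h3 : ∑' i, ‖((P a ∘L Mf) ∘L chi Bᶜ) (e i)‖ ^ 2 ≤ ε := by
      rw [← htrX]; exact (hsmall a).le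
    have h4 : (0 : ℝ) ≤ ∑' i, ‖(((P a ∘L Mf) ∘L Mg) ∘L chi Bᶜ) (e i)‖ ^ 2 :=
      tsum_nonneg fun i => sq_nonneg _
    calc (opTrace e (chi Bᶜ ∘L (Mf ∘L Pg a ∘L Mf) ∘L chi Bᶜ)).re
        ≤ ‖Ring.inverse (1 + (Mg ∘L Mg - 1) ∘L P a)‖
          * ∑' i, ‖(((P a ∘L Mf) ∘L Mg) ∘L chi Bᶜ) (e i)‖ ^ 2 := h1
      _ ≤ C * ∑' i, ‖(((P a ∘L Mf) ∘L Mg) ∘L chi Bᶜ) (e i)‖ ^ 2 :=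
          mul_le_mul_of_nonneg_right (hC a) h4
      _ ≤ C * ε := mul_le_mul_of_nonneg_left (h2.trans h3) (hCnn a)
end
end
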